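/- arXiv:1106.4733 — 5 statements merged into one kernel-verified Lean document; each statement's English description precedes it below -/
import Mathlib

section
/- Let L be an even positive definite lattice and let ν : H(L) → ℂ* be a group homomorphism of finite order which is invariant with respect to the SL₂(ℤ)-action, i.e. ν(A·h) = ν(h) for all A ∈ SL₂(ℤ) and h ∈ H(L). Then there exists t ∈ ℚ with t·s(L) ∈ ℤ such that ν([x,y;r]) = exp(πi t((x,x)+(y,y)−(x,y)+2r)) for all [x,y;r] ∈ H(L). Moreover the restriction of ν to H_s(L) takes values in {±1}, and this restriction is trivial if t·n(L) ∈ 2ℤ. -/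
open scoped BigOperators Classical

noncomputable section

/-- The integral bilinear form attached to a Gram matrix `S`. -/
def bilinZ {ι : Type*} [Fintype ι] (S : Matrix ι ι ℤ) (x y : ι → ℤ) : ℤ :=
  ∑ i, ∑ j, x i * S i j * y j

def bilinQ {ι : Type*} [Fintype ι] (S : Matrix ι ι ℤ) (x y : ι → ℚ) : ℚ :=
  ∑ i, ∑ j, x i * (S i j : ℚ) * y j

/-- `S` is the Gram matrix of an even positive definite lattice. -/
structure IsEvenPosDef {ι : Type*} [Fintype ι] (S : Matrix ι ι ℤ) : Prop where
  symm : S.IsSymm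
  posdef : ∀ x : ι → ℚ, x ≠ 0 → 0 < bilinQ S x x
  even_diag : ∀ i, (2 : ℤ) ∣ S i i

section bilin
variable {ι : Type*} [Fintype ι] (S : Matrix ι ι ℤ)

@[simp] lemma bilinZ_add_left (x x' y : ι → ℤ) :
    bilinZ S (x + x') y = bilinZ S x y + bilinZ S x' y := by
  simp [bilinZ, add_mul, Finset.sum_add_distrib]

@[simp] lemma bilinZ_add_right (x y y' : ι → ℤ) :
    bilinZ S x (y + y') = bilinZ S x y + bilinZ S x y' := by
  simp [bilinZ, mul_add, Finset.sum_add_distrib]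

@[simp] lemma bilinZ_neg_left (x y : ι → ℤ) : bilinZ S (-x) y = -bilinZ S x y := by
  simp [bilinZ, Finset.sum_neg_distrib]

@[simp] lemma bilinZ_neg_right (x y : ι → ℤ) : bilinZ S x (-y) = -bilinZ S x y := by
  simp [bilinZ, Finset.sum_neg_distrib]

@[simp] lemma bilinZ_zero_left (y : ι → ℤ) : bilinZ S 0 y = 0 := by simp [bilinZ]

@[simp] lemma bilinZ_zero_right (x : ι → ℤ) : bilinZ S x 0 = 0 := by simp [bilinZ]

end bilin

/-- The ambient Heisenberg-type group: symbols `[x,y;r]` with `x, y` lattice vectors and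
`r ∈ ℚ`, with the group law of the Heisenberg group. -/
@[ext] structure HeisAmb (ι : Type*) [Fintype ι] (S : Matrix ι ι ℤ) where
  x : ι → ℤ
  y : ι → ℤ
  r : ℚ

namespace HeisAmb

variable {ι : Type*} [Fintype ι] {S : Matrix ι ι ℤ}

instance : Mul (HeisAmb ι S) :=
  ⟨fun g h => ⟨g.x + h.x, g.y + h.y,
    g.r + h.r + ((bilinZ S g.x h.y - bilinZ S h.x g.y : ℤ) : ℚ) / 2⟩⟩

instance : One (HeisAmb ι S) := ⟨⟨0, 0, 0⟩⟩

instance : Inv (HeisAmb ι S) := ⟨fun g => ⟨-g.x, -g.y, -g.r⟩⟩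

@[simp] lemma mul_x (g h : HeisAmb ι S) : (g * h).x = g.x + h.x := rfl
@[simp] lemma mul_y (g h : HeisAmb ι S) : (g * h).y = g.y + h.y := rfl
@[simp] lemma mul_r (g h : HeisAmb ι S) :
    (g * h).r = g.r + h.r + ((bilinZ S g.x h.y - bilinZ S h.x g.y : ℤ) : ℚ) / 2 := rfl
@[simp] lemma one_x : (1 : HeisAmb ι S).x = 0 := rfl
@[simp] lemma one_y : (1 : HeisAmb ι S).y = 0 := rfl
@[simp] lemma one_r : (1 : HeisAmb ι S).r = 0 := rfl
@[simp] lemma inv_x (g : HeisAmb ι S) : g⁻¹.x = -g.x := rfl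
@[simp] lemma inv_y (g : HeisAmb ι S) : g⁻¹.y = -g.y := rfl
@[simp] lemma inv_r (g : HeisAmb ι S) : g⁻¹.r = -g.r := rfl

instance : Group (HeisAmb ι S) where
  mul_assoc a b c := by
    ext <;> simp only [mul_x, mul_y, mul_r, bilinZ_add_left, bilinZ_add_right]
    · rw [add_assoc]
    · rw [add_assoc]
    · push_cast; ring
  one_mul g := by ext <;> simp
  mul_one g := by ext <;> simp
  inv_mul_cancel g := by ext <;> simp

end HeisAmb

/-- The integral Heisenberg group `H(L)`: the elements `[x,y;r]` with
`r + (x,y)/2 ∈ ℤ`. -/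
def HeisL {ι : Type*} [Fintype ι] (S : Matrix ι ι ℤ) : Subgroup (HeisAmb ι S) where
  carrier := {g | ∃ m : ℤ, g.r + ((bilinZ S g.x g.y : ℤ) : ℚ) / 2 = m}
  mul_mem' := by
    rintro g h ⟨m₁, h₁⟩ ⟨m₂, h₂⟩
    refine ⟨m₁ + m₂ + bilinZ S g.x h.y, ?_⟩
    simp only [HeisAmb.mul_x, HeisAmb.mul_y, HeisAmb.mul_r,
      bilinZ_add_left, bilinZ_add_right]
    push_cast at h₁ h₂ ⊢
    linarith
  one_mem' := ⟨0, by simp⟩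
  inv_mem' := by
    rintro g ⟨m, h⟩
    refine ⟨-m + bilinZ S g.x g.y, ?_⟩
    simp only [HeisAmb.inv_x, HeisAmb.inv_y, HeisAmb.inv_r,
      bilinZ_neg_left, bilinZ_neg_right]
    push_cast at h ⊢
    linarith

/-- The minimal integral Heisenberg group `H_s(L)`, generated by the elements
`[x,0;0]` and `[0,y;0]`. -/
def HeisS {ι : Type*} [Fintype ι] (S : Matrix ι ι ℤ) : Subgroup (HeisAmb ι S) :=
  Subgroup.closure {g : HeisAmb ι S | (g.y = 0 ∧ g.r = 0) ∨ (g.x = 0 ∧ g.r = 0)}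

abbrev SL2Z := Matrix.SpecialLinearGroup (Fin 2) ℤ

/-- The action of `A = (a,b;c,d) ∈ SL₂(ℤ)` on the Heisenberg group:
`A·[x,y;r] = [dx−cy, −bx+ay; r]`. -/
def slAct {ι : Type*} [Fintype ι] (S : Matrix ι ι ℤ) (A : SL2Z) (g : HeisAmb ι S) :
    HeisAmb ι S :=
  ⟨fun i => A.1 1 1 * g.x i - A.1 1 0 * g.y i,
   fun i => -A.1 0 1 * g.x i + A.1 0 0 * g.y i, g.r⟩

section aux
variable {ι : Type*} [Fintype ι] {S : Matrix ι ι ℤ}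

lemma bilinZ_symm' (hs : S.IsSymm) (x y : ι → ℤ) : bilinZ S x y = bilinZ S y x := by
  rw [bilinZ, bilinZ, Finset.sum_comm]
  refine Finset.sum_congr rfl fun j _ => Finset.sum_congr rfl fun i _ => ?_
  rw [hs.apply]; ring

lemma bilinZ_even' (hs : S.IsSymm) (hd : ∀ i, (2:ℤ) ∣ S i i) (x : ι → ℤ) :
    2 ∣ bilinZ S x x := by
  have key : ((bilinZ S x x : ℤ) : ZMod 2) = 0 := by
    rw [bilinZ]
    push_cast
    rw [← Finset.sum_product']
    rw [← Finset.diag_union_offDiag Finset.univ,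
      Finset.sum_union (Finset.disjoint_diag_offDiag _)]
    have h1 : ∑ p ∈ Finset.univ.diag, ((x p.1 :ZMod 2) * (S p.1 p.2 : ℤ) * x p.2) = 0 := by
      refine Finset.sum_eq_zero fun p hp => ?_
      rw [Finset.mem_diag] at hp
      obtain ⟨c, hc⟩ := hd p.1
      rw [← hp.2, hc]
      push_cast
      rw [show ((2:ZMod 2)) = 0 by decide]
      ring
    have h2 : ∑ p ∈ Finset.univ.offDiag, ((x p.1 :ZMod 2) * (S p.1 p.2 : ℤ) * x p.2) = 0 := by
      refine Finset.sum_involution (fun p _ => (p.2, p.1)) (fun p hp => ?_)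
        (fun p hp _ => ?_) (fun p hp => ?_) (fun p hp => ?_)
      · have h3 : ((x p.2 :ZMod 2) * (S p.2 p.1 : ℤ) * x p.1)
            = ((x p.1 :ZMod 2) * (S p.1 p.2 : ℤ) * x p.2) := by
          rw [hs.apply]; ring
        rw [h3, ← two_mul, show ((2:ZMod 2)) = 0 by decide, zero_mul]
      · rw [Finset.mem_offDiag] at hp
        intro h
        exact hp.2.2 (congrArg Prod.fst h).symm
      · rw [Finset.mem_offDiag] at hp ⊢
        exact ⟨hp.2.1, hp.1, fun h => hp.2.2 h.symm⟩
      · rfl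
    rw [h1, h2, add_zero]
  exact (ZMod.intCast_zmod_eq_zero_iff_dvd _ 2).mp key

lemma heis_mk_mul (x y : ι → ℤ) (r : ℚ) (x' y' : ι → ℤ) (r' : ℚ) :
    (⟨x,y,r⟩ : HeisAmb ι S) * ⟨x',y',r'⟩
      = ⟨x+x', y+y', r+r'+((bilinZ S x y' - bilinZ S x' y : ℤ):ℚ)/2⟩ := rfl

lemma cent_zpow (m : ℤ) :
    (⟨0,0,(1:ℚ)⟩ : HeisAmb ι S) ^ m = ⟨0,0,(m:ℚ)⟩ := by
  induction m using Int.induction_on with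
  | zero => ext <;> simp [show ((1:HeisAmb ι S)) = ⟨0,0,0⟩ from rfl]
  | succ k ih =>
      rw [zpow_add_one, ih, heis_mk_mul]
      ext <;> simp <;> push_cast <;> ring
  | pred k ih =>
      rw [zpow_sub_one, ih, show ((⟨0,0,(1:ℚ)⟩ : HeisAmb ι S))⁻¹ = ⟨0,0,(-1:ℚ)⟩ from
        by ext <;> simp [show ((⟨0,0,(1:ℚ)⟩ : HeisAmb ι S))⁻¹.r = -1 from rfl], heis_mk_mul]
      ext <;> simp <;> push_cast <;> ring

end aux

/-- An `SL₂(ℤ)`-invariant finite-order character `ν : H(L) → ℂ*` is of the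
form `ν([x,y;r]) = exp(πi t((x,x)+(y,y)−(x,y)+2r))` for some `t ∈ ℚ` with `t·s(L) ∈ ℤ`;
its restriction to `H_s(L)` takes values in `{±1}` and is trivial if `t·n(L) ∈ 2ℤ`. -/
theorem statement1 {ι : Type*} [Fintype ι] (S : Matrix ι ι ℤ) (hS : IsEvenPosDef S)
    (s nL : ℤ) (hs : 0 ≤ s) (hn : 0 ≤ nL)
    (hspan : Ideal.span {z : ℤ | ∃ x y : ι → ℤ, bilinZ S x y = z} = Ideal.span {s})
    (hnspan : Ideal.span {z : ℤ | ∃ x : ι → ℤ, bilinZ S x x = z} = Ideal.span {nL})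
    (ν : (HeisL S) →* ℂˣ)
    (hfin : ∃ N : ℕ, 0 < N ∧ ∀ h, ν h ^ N = 1)
    (hinv : ∀ (A : SL2Z) (g : HeisAmb ι S) (hg : g ∈ HeisL S)
      (hg' : slAct S A g ∈ HeisL S), ν ⟨slAct S A g, hg'⟩ = ν ⟨g, hg⟩) :
    ∃ t : ℚ, (∃ m : ℤ, t * (s : ℚ) = m) ∧
      (∀ (g : HeisAmb ι S) (hg : g ∈ HeisL S),
        (ν ⟨g, hg⟩ : ℂ) = Complex.exp ((Real.pi : ℂ) * Complex.I * (t : ℂ) *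
          (((bilinZ S g.x g.x + bilinZ S g.y g.y - bilinZ S g.x g.y : ℤ) : ℂ)
            + 2 * (g.r : ℂ)))) ∧
      (∀ (g : HeisAmb ι S) (hg : g ∈ HeisL S), g ∈ HeisS S →
        (ν ⟨g, hg⟩ : ℂ) = 1 ∨ (ν ⟨g, hg⟩ : ℂ) = -1) ∧
      ((∃ m : ℤ, t * (nL : ℚ) = 2 * m) →
        ∀ (g : HeisAmb ι S) (hg : g ∈ HeisL S), g ∈ HeisS S → (ν ⟨g, hg⟩ : ℂ) = 1) := by
  classical
  obtain ⟨N, hNpos, hNord⟩ := hfin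
  have hmx : ∀ x : ι → ℤ, (⟨x, 0, 0⟩ : HeisAmb ι S) ∈ HeisL S := fun x => ⟨0, by simp⟩
  have hmy : ∀ y : ι → ℤ, (⟨0, y, 0⟩ : HeisAmb ι S) ∈ HeisL S := fun y => ⟨0, by simp⟩
  have hmc : ∀ m : ℤ, (⟨0, 0, (m:ℚ)⟩ : HeisAmb ι S) ∈ HeisL S := fun m => ⟨m, by simp⟩
  have hm1 : (⟨0, 0, (1:ℚ)⟩ : HeisAmb ι S) ∈ HeisL S := ⟨1, by simp⟩
  set ε : ℂˣ := ν ⟨⟨0,0,(1:ℚ)⟩, hm1⟩ with hεdef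
  -- ν of central elements
  have hνc : ∀ m : ℤ, ν ⟨⟨0,0,(m:ℚ)⟩, hmc m⟩ = ε ^ m := by
    intro m
    have h1 : (⟨⟨0,0,(m:ℚ)⟩, hmc m⟩ : HeisL S) = (⟨⟨0,0,(1:ℚ)⟩, hm1⟩ : HeisL S) ^ m := by
      apply Subtype.ext
      rw [SubgroupClass.coe_zpow]
      exact (cent_zpow m).symm
    rw [h1, map_zpow]
  have hνmul : ∀ (g h : HeisAmb ι S) (hg : g ∈ HeisL S) (hh : h ∈ HeisL S)
      (hgh : g*h ∈ HeisL S), ν ⟨g*h, hgh⟩ = ν ⟨g,hg⟩ * ν ⟨h,hh⟩ := by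
    intro g h hg hh hgh
    have h1 : (⟨g*h, hgh⟩ : HeisL S) = ⟨g,hg⟩ * ⟨h,hh⟩ := rfl
    rw [h1, map_mul]
  -- commutator relation
  have hcomm : ∀ x y : ι → ℤ, ε ^ (bilinZ S x y) = 1 := by
    intro x y
    have e1 : (⟨x,0,0⟩ : HeisAmb ι S) * ⟨0,y,0⟩ * (⟨x,0,0⟩ : HeisAmb ι S)⁻¹
        * (⟨0,y,0⟩ : HeisAmb ι S)⁻¹ = ⟨0,0,((bilinZ S x y :ℤ):ℚ)⟩ := by
      ext <;> simp <;> ring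
    have h2 : (⟨⟨0,0,((bilinZ S x y:ℤ):ℚ)⟩, hmc _⟩ : HeisL S)
        = ⟨_, hmx x⟩ * ⟨_, hmy y⟩ * (⟨_, hmx x⟩ : HeisL S)⁻¹ * (⟨_, hmy y⟩ : HeisL S)⁻¹ :=
      Subtype.ext e1.symm
    rw [← hνc, h2, map_mul, map_mul, map_mul, map_inv, map_inv]
    rw [mul_comm (ν ⟨_, hmx x⟩) (ν ⟨_, hmy y⟩)]
    group
  -- decomposition of a general element
  have hdecomp : ∀ (g : HeisAmb ι S) (hg : g ∈ HeisL S), ∃ m : ℤ,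
      (g.r + ((bilinZ S g.x g.y :ℤ):ℚ)/2 = (m:ℚ)) ∧
      ν ⟨g, hg⟩ = ν ⟨⟨g.x,0,0⟩, hmx g.x⟩ * ν ⟨⟨0,g.y,0⟩, hmy g.y⟩
        * ε ^ (m - bilinZ S g.x g.y) := by
    intro g hg
    have hg2 := hg
    obtain ⟨m, hm⟩ := hg2
    refine ⟨m, hm, ?_⟩
    have e : g = (⟨g.x,0,0⟩ : HeisAmb ι S) * ⟨0,g.y,0⟩
        * ⟨0,0,((m - bilinZ S g.x g.y :ℤ):ℚ)⟩ := by
      ext <;> simp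
      push_cast
      push_cast at hm
      linarith
    have h1 : (⟨g, hg⟩ : HeisL S) = ⟨_, hmx g.x⟩ * ⟨_, hmy g.y⟩
        * ⟨_, hmc (m - bilinZ S g.x g.y)⟩ := Subtype.ext e
    rw [h1, map_mul, map_mul, hνc]
  -- the T and W elements of SL₂(ℤ)
  have hdetT : ((!![1,1;0,1] : Matrix (Fin 2) (Fin 2) ℤ)).det = 1 := by
    norm_num [Matrix.det_fin_two_of]
  have hdetW : ((!![0,-1;1,0] : Matrix (Fin 2) (Fin 2) ℤ)).det = 1 := by
    norm_num [Matrix.det_fin_two_of]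
  have hTx : ∀ x : ι → ℤ, slAct S (⟨!![1,1;0,1], hdetT⟩ : SL2Z) ⟨x, 0, 0⟩
      = (⟨x, -x, 0⟩ : HeisAmb ι S) := by
    intro x
    ext i <;> simp [slAct]
  have hWy : ∀ y : ι → ℤ, slAct S (⟨!![0,-1;1,0], hdetW⟩ : SL2Z) ⟨0, y, 0⟩
      = (⟨-y, 0, 0⟩ : HeisAmb ι S) := by
    intro y
    ext i <;> simp [slAct]
  -- ψ(y) = ε^{-q}
  have hψ : ∀ (y : ι → ℤ) (q : ℤ), bilinZ S y y = 2*q →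
      ν ⟨⟨0, y, 0⟩, hmy y⟩ = ε ^ (-q) := by
    intro y q hq
    have hby : bilinZ S (-y) y = -(2*q) := by rw [bilinZ_neg_left, hq]
    have hmem : (⟨-y, y, 0⟩ : HeisAmb ι S) ∈ HeisL S := by
      refine ⟨-q, ?_⟩
      rw [show ((⟨-y,y,0⟩ : HeisAmb ι S)).x = -y from rfl,
        show ((⟨-y,y,0⟩ : HeisAmb ι S)).y = y from rfl,
        show ((⟨-y,y,0⟩ : HeisAmb ι S)).r = 0 from rfl, hby]
      push_cast; ring
    have hmem' : slAct S (⟨!![1,1;0,1], hdetT⟩ : SL2Z) ⟨-y, 0, 0⟩ ∈ HeisL S := by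
      rw [hTx, neg_neg]; exact hmem
    have hinv1 := hinv (⟨!![1,1;0,1], hdetT⟩ : SL2Z) ⟨-y, 0, 0⟩ (hmx (-y)) hmem'
    have e2 : slAct S (⟨!![1,1;0,1], hdetT⟩ : SL2Z) ⟨-y, 0, 0⟩ = (⟨-y, y, 0⟩ : HeisAmb ι S) := by
      rw [hTx, neg_neg]
    have h1 : (⟨slAct S (⟨!![1,1;0,1], hdetT⟩ : SL2Z) ⟨-y, 0, 0⟩, hmem'⟩ : HeisL S)
        = ⟨⟨-y, y, 0⟩, hmem⟩ := Subtype.ext e2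
    rw [h1] at hinv1
    obtain ⟨m, hm, hv⟩ := hdecomp ⟨-y, y, 0⟩ hmem
    have hmq : m = -q := by
      have : (0:ℚ) + ((bilinZ S (-y) y : ℤ):ℚ)/2 = (m:ℚ) := hm
      rw [hby] at this
      push_cast at this
      exact_mod_cast (by push_cast; linarith : (m:ℚ) = ((-q : ℤ):ℚ))
    rw [hinv1] at hv
    dsimp only at hv
    rw [hmq, hby, show -q - -(2*q) = q from by ring] at hv
    have h3 : ν ⟨⟨0, y, 0⟩, hmy y⟩ * ε ^ q = 1 := by
      have := hv
      rw [mul_assoc] at this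
      exact (left_eq_mul.mp this)
    have h4 : ν ⟨⟨0, y, 0⟩, hmy y⟩ = (ε ^ q)⁻¹ := eq_inv_of_mul_eq_one_left h3
    rw [h4, ← zpow_neg]
  -- φ(x) = ε^{-q}
  have hφ : ∀ (x : ι → ℤ) (q : ℤ), bilinZ S x x = 2*q →
      ν ⟨⟨x, 0, 0⟩, hmx x⟩ = ε ^ (-q) := by
    intro x q hq
    have hmem' : slAct S (⟨!![0,-1;1,0], hdetW⟩ : SL2Z) ⟨0, -x, 0⟩ ∈ HeisL S := by
      rw [hWy, neg_neg]; exact hmx x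
    have hinv1 := hinv (⟨!![0,-1;1,0], hdetW⟩ : SL2Z) ⟨0, -x, 0⟩ (hmy (-x)) hmem'
    have e2 : slAct S (⟨!![0,-1;1,0], hdetW⟩ : SL2Z) ⟨0, -x, 0⟩ = (⟨x, 0, 0⟩ : HeisAmb ι S) := by
      rw [hWy, neg_neg]
    have h1 : (⟨slAct S (⟨!![0,-1;1,0], hdetW⟩ : SL2Z) ⟨0, -x, 0⟩, hmem'⟩ : HeisL S)
        = ⟨⟨x, 0, 0⟩, hmx x⟩ := Subtype.ext e2
    rw [h1] at hinv1
    rw [hinv1]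
    exact hψ (-x) q (by rwa [bilinZ_neg_left, bilinZ_neg_right, neg_neg])
  -- main value computation: ν(g) = ε^(qx + qy + m - (x,y))
  have hval : ∀ (g : HeisAmb ι S) (hg : g ∈ HeisL S) (m qx qy : ℤ),
      (g.r + ((bilinZ S g.x g.y :ℤ):ℚ)/2 = (m:ℚ)) →
      bilinZ S g.x g.x = 2*qx → bilinZ S g.y g.y = 2*qy →
      ν ⟨g, hg⟩ = ε ^ (qx + qy + m - bilinZ S g.x g.y) := by
    intro g hg m qx qy hm hqx hqy
    obtain ⟨m', hm', hv⟩ := hdecomp g hg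
    have hmm : m' = m := by
      have := hm'.symm.trans hm
      exact_mod_cast this
    rw [hmm] at hv
    rw [hv, hφ g.x qx hqx, hψ g.y qy hqy]
    have h2qx : ε ^ (2*qx) = 1 := by rw [← hqx]; exact hcomm g.x g.x
    have h2qy : ε ^ (2*qy) = 1 := by rw [← hqy]; exact hcomm g.y g.y
    calc ε ^ (-qx) * ε ^ (-qy) * ε ^ (m - bilinZ S g.x g.y)
        = ε ^ (-qx + -qy + (m - bilinZ S g.x g.y)) := by rw [← zpow_add, ← zpow_add]
      _ = ε ^ (qx + qy + m - bilinZ S g.x g.y) * (ε ^ (2*qx))⁻¹ * (ε ^ (2*qy))⁻¹ := by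
          rw [← zpow_neg, ← zpow_neg, ← zpow_add, ← zpow_add]; congr 1; ring
      _ = ε ^ (qx + qy + m - bilinZ S g.x g.y) := by rw [h2qx, h2qy]; group
  -- the root of unity ε and the parameter t
  have hεN : (ε:ℂ) ^ N = 1 := by
    have := hNord ⟨⟨0,0,(1:ℚ)⟩, hm1⟩
    have h2 : ((ν ⟨⟨0,0,(1:ℚ)⟩, hm1⟩ ^ N : ℂˣ) : ℂ) = ((1 : ℂˣ) : ℂ) := by rw [this]
    rwa [Units.val_pow_eq_pow_val, Units.val_one] at h2
  haveI : NeZero N := ⟨hNpos.ne'⟩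
  obtain ⟨k, hkN, hkeq⟩ :=
    (Complex.isPrimitiveRoot_exp N hNpos.ne').eq_pow_of_pow_eq_one hεN
  set t : ℚ := (k:ℚ)/(N:ℚ) with htdef
  have hNQ : ((N:ℚ)) ≠ 0 := by exact_mod_cast hNpos.ne'
  have hεt : (ε:ℂ) = Complex.exp (2*(Real.pi:ℂ)*Complex.I*((t:ℚ):ℂ)) := by
    rw [← hkeq, ← Complex.exp_nat_mul]
    congr 1
    rw [htdef]
    push_cast
    field_simp
  have hεz : ∀ z : ℤ, ((ε ^ z : ℂˣ) : ℂ)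
      = Complex.exp ((Real.pi:ℂ)*Complex.I*((t:ℚ):ℂ)*(2*(z:ℂ))) := by
    intro z
    rw [Units.val_zpow_eq_zpow_val, hεt, ← Complex.exp_int_mul]
    congr 1
    ring
  have hπI : (2*(Real.pi:ℂ)*Complex.I) ≠ 0 := by
    simp [Real.pi_ne_zero, Complex.I_ne_zero]
  -- ε^s = 1
  have hεs1 : ε ^ s = 1 := by
    have hsmem : s ∈ Ideal.span {z : ℤ | ∃ x y : ι → ℤ, bilinZ S x y = z} := by
      rw [hspan]; exact Ideal.mem_span_singleton_self s
    refine Submodule.span_induction (p := fun z _ => ε ^ z = 1) ?_ ?_ ?_ ?_ hsmem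
    · rintro z ⟨x, y, rfl⟩; exact hcomm x y
    · simp
    · intro a b _ _ ha hb; rw [zpow_add, ha, hb, one_mul]
    · intro c a _ ha; rw [smul_eq_mul, mul_comm, zpow_mul, ha, one_zpow]
  -- subgroup inclusion HeisS ≤ HeisL
  have hsub : HeisS S ≤ HeisL S := by
    refine (Subgroup.closure_le _).mpr ?_
    rintro ⟨x, y, r⟩ (⟨hy, hr⟩ | ⟨hx, hr⟩)
    · dsimp at hy hr; subst hy; subst hr; exact hmx x
    · dsimp at hx hr; subst hx; subst hr; exact hmy y
  refine ⟨t, ?_, ?_, ?_, ?_⟩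
  · -- t·s ∈ ℤ
    have h1 : Complex.exp ((Real.pi:ℂ)*Complex.I*((t:ℚ):ℂ)*(2*(s:ℂ))) = 1 := by
      rw [← hεz, hεs1, Units.val_one]
    obtain ⟨n, hn⟩ := Complex.exp_eq_one_iff.mp h1
    refine ⟨n, ?_⟩
    have h2 : (2*(Real.pi:ℂ)*Complex.I) * (((t:ℚ):ℂ)*(s:ℂ))
        = (2*(Real.pi:ℂ)*Complex.I) * (n:ℂ) := by linear_combination hn
    have h3 : ((t:ℚ):ℂ)*((s:ℤ):ℂ) = ((n:ℤ):ℂ) := mul_left_cancel₀ hπI h2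
    exact_mod_cast h3
  · -- value formula
    intro g hg
    obtain ⟨qx, hqx⟩ := bilinZ_even' hS.symm hS.even_diag g.x
    obtain ⟨qy, hqy⟩ := bilinZ_even' hS.symm hS.even_diag g.y
    have hg2 := hg
    obtain ⟨m, hm⟩ := hg2
    rw [hval g hg m qx qy hm hqx hqy, hεz]
    congr 1
    have hrc : (g.r:ℂ) = (m:ℂ) - ((bilinZ S g.x g.y : ℤ):ℂ)/2 := by
      have h5 : (g.r:ℚ) = (m:ℚ) - ((bilinZ S g.x g.y : ℤ):ℚ)/2 := by linarith [hm]
      exact_mod_cast h5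
    rw [hrc]
    push_cast [hqx, hqy]
    ring
  · -- values on HeisS are ±1
    intro g hg hgS
    revert hg
    refine Subgroup.closure_induction
      (p := fun g _ => ∀ hg : g ∈ HeisL S,
        ((ν ⟨g, hg⟩ : ℂˣ) : ℂ) = 1 ∨ ((ν ⟨g, hg⟩ : ℂˣ) : ℂ) = -1) ?_ ?_ ?_ ?_ hgS
    · rintro ⟨x, y, r⟩ (⟨hy, hr⟩ | ⟨hx, hr⟩) hgL
      · dsimp at hy hr; subst hy; subst hr
        obtain ⟨q, hq⟩ := bilinZ_even' hS.symm hS.even_diag x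
        have he : ν ⟨⟨x, 0, 0⟩, hgL⟩ = ν ⟨⟨x, 0, 0⟩, hmx x⟩ := rfl
        rw [he, hφ x q hq]
        have hsq : (ε ^ (-q)) ^ (2:ℕ) = 1 := by
          rw [← zpow_natCast, ← zpow_mul, show ((-q) * ((2:ℕ):ℤ)) = -(2*q) from by push_cast; ring,
            zpow_neg, ← hq, hcomm, inv_one]
        have hc : ((ε ^ (-q) : ℂˣ) : ℂ) ^ (2:ℕ) = 1 := by
          rw [← Units.val_pow_eq_pow_val, hsq, Units.val_one]
        have h0 : (((ε ^ (-q) : ℂˣ) : ℂ) - 1) * (((ε ^ (-q) : ℂˣ) : ℂ) + 1) = 0 := by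
          linear_combination hc
        rcases mul_eq_zero.mp h0 with h | h
        · exact Or.inl (sub_eq_zero.mp h)
        · exact Or.inr (eq_neg_of_add_eq_zero_left h)
      · dsimp at hx hr; subst hx; subst hr
        obtain ⟨q, hq⟩ := bilinZ_even' hS.symm hS.even_diag y
        have he : ν ⟨⟨0, y, 0⟩, hgL⟩ = ν ⟨⟨0, y, 0⟩, hmy y⟩ := rfl
        rw [he, hψ y q hq]
        have hsq : (ε ^ (-q)) ^ (2:ℕ) = 1 := by
          rw [← zpow_natCast, ← zpow_mul, show ((-q) * ((2:ℕ):ℤ)) = -(2*q) from by push_cast; ring,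
            zpow_neg, ← hq, hcomm, inv_one]
        have hc : ((ε ^ (-q) : ℂˣ) : ℂ) ^ (2:ℕ) = 1 := by
          rw [← Units.val_pow_eq_pow_val, hsq, Units.val_one]
        have h0 : (((ε ^ (-q) : ℂˣ) : ℂ) - 1) * (((ε ^ (-q) : ℂˣ) : ℂ) + 1) = 0 := by
          linear_combination hc
        rcases mul_eq_zero.mp h0 with h | h
        · exact Or.inl (sub_eq_zero.mp h)
        · exact Or.inr (eq_neg_of_add_eq_zero_left h)
    · intro hgL
      left
      have h1 : (⟨1, hgL⟩ : HeisL S) = 1 := Subtype.ext rfl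
      rw [h1, map_one, Units.val_one]
    · intro a b ha hb pa pb hgL
      have haL : a ∈ HeisL S := hsub ha
      have hbL : b ∈ HeisL S := hsub hb
      rw [hνmul a b haL hbL hgL, Units.val_mul]
      rcases pa haL with h | h <;> rcases pb hbL with h' | h' <;> rw [h, h'] <;> norm_num
    · intro a ha pa hgL
      have haL : a ∈ HeisL S := hsub ha
      have h1 : (⟨a⁻¹, hgL⟩ : HeisL S) = (⟨a, haL⟩ : HeisL S)⁻¹ := rfl
      rw [h1, map_inv, Units.val_inv_eq_inv_val]
      rcases pa haL with h | h <;> rw [h] <;> norm_num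
  · -- triviality on HeisS if t·nL ∈ 2ℤ
    rintro ⟨m', hm'⟩ g hg hgS
    revert hg
    refine Subgroup.closure_induction
      (p := fun g _ => ∀ hg : g ∈ HeisL S, ((ν ⟨g, hg⟩ : ℂˣ) : ℂ) = 1) ?_ ?_ ?_ ?_ hgS
    · have key : ∀ (x : ι → ℤ) (q : ℤ), bilinZ S x x = 2*q →
          ((ε ^ (-q) : ℂˣ) : ℂ) = 1 := by
        intro x q hq
        have hdvd : nL ∣ bilinZ S x x := by
          have hmem : bilinZ S x x ∈ Ideal.span {z : ℤ | ∃ x : ι → ℤ, bilinZ S x x = z} :=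
            Ideal.subset_span ⟨x, rfl⟩
          rw [hnspan] at hmem
          exact Ideal.mem_span_singleton.mp hmem
        obtain ⟨d, hd⟩ := hdvd
        rw [hεz (-q)]
        refine Complex.exp_eq_one_iff.mpr ⟨-(m'*d), ?_⟩
        have e1 : ((t:ℚ):ℂ) * ((nL:ℤ):ℂ) = 2*((m':ℤ):ℂ) := by exact_mod_cast hm'
        have e2 : 2*((q:ℤ):ℂ) = ((nL:ℤ):ℂ)*((d:ℤ):ℂ) := by
          exact_mod_cast (hq.symm.trans hd : 2*q = nL*d)
        push_cast
        linear_combination (-(Real.pi:ℂ)*Complex.I*((d:ℤ):ℂ))*e1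
          + (-(Real.pi:ℂ)*Complex.I*((t:ℚ):ℂ))*e2
      rintro ⟨x, y, r⟩ (⟨hy, hr⟩ | ⟨hx, hr⟩) hgL
      · dsimp at hy hr; subst hy; subst hr
        obtain ⟨q, hq⟩ := bilinZ_even' hS.symm hS.even_diag x
        have he : ν ⟨⟨x, 0, 0⟩, hgL⟩ = ν ⟨⟨x, 0, 0⟩, hmx x⟩ := rfl
        rw [he, hφ x q hq]
        exact key x q hq
      · dsimp at hx hr; subst hx; subst hr
        obtain ⟨q, hq⟩ := bilinZ_even' hS.symm hS.even_diag y
        have he : ν ⟨⟨0, y, 0⟩, hgL⟩ = ν ⟨⟨0, y, 0⟩, hmy y⟩ := rfl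
        rw [he, hψ y q hq]
        exact key y q hq
    · intro hgL
      have h1 : (⟨1, hgL⟩ : HeisL S) = 1 := Subtype.ext rfl
      rw [h1, map_one, Units.val_one]
    · intro a b ha hb pa pb hgL
      have haL : a ∈ HeisL S := hsub ha
      have hbL : b ∈ HeisL S := hsub hb
      rw [hνmul a b haL hbL hgL, Units.val_mul, pa haL, pb hbL, one_mul]
    · intro a ha pa hgL
      have haL : a ∈ HeisL S := hsub ha
      have h1 : (⟨a⁻¹, hgL⟩ : HeisL S) = (⟨a, haL⟩ : HeisL S)⁻¹ := rfl
      rw [h1, map_inv, Units.val_inv_eq_inv_val, pa haL, inv_one]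
end
end

section
/- Let φ ∈ J_{k,L;t}(χ₁ × ν) be a holomorphic Jacobi form of weight k and index t > 0 for an even positive definite lattice L, with finite-order SL₂(ℤ)-character (or multiplier system) χ₁ and Heisenberg character ν. If φ is not identically zero, then t·(x,y) ∈ ℤ for all x,y ∈ L (equivalently t·s(L) ∈ ℤ, where s(L) is the scale of L), and the Heisenberg character is uniquely determined by t: ν([x,y;(1/2)(x,y)]) = exp(πi t((x,x)+(y,y))) for all x,y ∈ L. -/
open Complex Matrix
open scoped Real BigOperators Classical

noncomputable section

def bilinR {ι : Type*} [Fintype ι] (S : Matrix ι ι ℤ) (x y : ι → ℝ) : ℝ :=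
  ∑ i, ∑ j, x i * (S i j : ℝ) * y j

def bilinC {ι : Type*} [Fintype ι] (S : Matrix ι ι ℤ) (x y : ι → ℂ) : ℂ :=
  ∑ i, ∑ j, x i * (S i j : ℂ) * y j

/-- `l ∈ (1/2) L^∨`, written in lattice coordinates:  `2(l,x) ∈ ℤ` for every lattice vector. -/
def InHalfDual {ι : Type*} [Fintype ι] (S : Matrix ι ι ℤ) (l : ι → ℚ) : Prop :=
  ∀ x : ι → ℤ, ∃ m : ℤ, 2 * bilinQ S l (fun i => (x i : ℚ)) = m

/-- `φ` is a holomorphic Jacobi form of weight `k` and index `t` for the lattice `(ℤ^ι, S)`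
with `SL₂(ℤ)`-character (multiplier system) `χ`, Heisenberg character `ν`,
and Fourier coefficients `f`. -/
structure IsJacobiForm {ι : Type*} [Fintype ι] (S : Matrix ι ι ℤ) (k t : ℚ)
    (χ : SL2Z → ℂ) (ν : (ι → ℤ) → (ι → ℤ) → ℂ)
    (f : ℚ × (ι → ℚ) → ℂ) (φ : ℂ → (ι → ℂ) → ℂ) : Prop where
  holo : DifferentiableOn ℂ (fun p : ℂ × (ι → ℂ) => φ p.1 p.2) {p | 0 < p.1.im}
  modular : ∀ A : SL2Z, ∀ τ : ℂ, 0 < τ.im → ∀ z : ι → ℂ,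
    φ (((A.1 0 0 : ℂ) * τ + (A.1 0 1 : ℂ)) / ((A.1 1 0 : ℂ) * τ + (A.1 1 1 : ℂ)))
        (fun i => z i / ((A.1 1 0 : ℂ) * τ + (A.1 1 1 : ℂ)))
      = χ A * ((A.1 1 0 : ℂ) * τ + (A.1 1 1 : ℂ)) ^ (k : ℂ)
        * Complex.exp ((π : ℂ) * I * (t : ℂ) * (A.1 1 0 : ℂ) * bilinC S z z
            / ((A.1 1 0 : ℂ) * τ + (A.1 1 1 : ℂ)))
        * φ τ z
  elliptic : ∀ x y : ι → ℤ, ∀ τ : ℂ, 0 < τ.im → ∀ z : ι → ℂ,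
    φ τ (fun i => z i + (x i : ℂ) * τ + (y i : ℂ))
      = ν x y * Complex.exp (-((π : ℂ) * I * (t : ℂ))
            * ((bilinZ S x x : ℂ) * τ + 2 * bilinC S (fun i => (x i : ℂ)) z))
        * φ τ z
  support : ∀ p : ℚ × (ι → ℚ), f p ≠ 0 →
    0 ≤ p.1 ∧ InHalfDual S p.2 ∧ 0 ≤ 2 * p.1 * t - bilinQ S p.2 p.2
  expansion : ∀ τ : ℂ, 0 < τ.im → ∀ z : ι → ℂ,
    HasSum (fun p : ℚ × (ι → ℚ) =>
        f p * Complex.exp (2 * (π : ℂ) * I *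
          ((p.1 : ℂ) * τ + bilinC S (fun i => (p.2 i : ℂ)) z))) (φ τ z)

/-- The Fourier coefficients `f` are supported on indices of positive hyperbolic norm
(cusp form condition). -/
def IsCuspSupport {ι : Type*} [Fintype ι] (S : Matrix ι ι ℤ) (t : ℚ)
    (f : ℚ × (ι → ℚ) → ℂ) : Prop :=
  ∀ p : ℚ × (ι → ℚ), f p ≠ 0 → 0 < 2 * p.1 * t - bilinQ S p.2 p.2

/-- `c` is a root of unity. -/
def HasFiniteOrder (c : ℂ) : Prop := ∃ N : ℕ, 0 < N ∧ c ^ N = 1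

namespace S2Aux
variable {ι : Type*} [Fintype ι]

lemma bilinC_add_left (S : Matrix ι ι ℤ) (a b c : ι → ℂ) :
    bilinC S (fun i => a i + b i) c = bilinC S a c + bilinC S b c := by
  simp [bilinC, add_mul, Finset.sum_add_distrib]

lemma bilinC_add_right (S : Matrix ι ι ℤ) (a b c : ι → ℂ) :
    bilinC S a (fun i => b i + c i) = bilinC S a b + bilinC S a c := by
  simp [bilinC, mul_add, Finset.sum_add_distrib]

lemma bilinC_div_right (S : Matrix ι ι ℤ) (r : ℂ) (a c : ι → ℂ) :
    bilinC S a (fun i => c i / r) = bilinC S a c / r := by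
  simp [bilinC, div_eq_mul_inv, Finset.sum_mul, mul_assoc]

lemma bilinC_neg_left (S : Matrix ι ι ℤ) (a c : ι → ℂ) :
    bilinC S (fun i => -(a i)) c = -bilinC S a c := by
  simp [bilinC]

lemma bilinC_symm {S : Matrix ι ι ℤ} (hS : S.IsSymm) (a b : ι → ℂ) :
    bilinC S a b = bilinC S b a := by
  rw [bilinC, Finset.sum_comm]
  refine Finset.sum_congr rfl fun j _ => Finset.sum_congr rfl fun i _ => ?_
  rw [show S i j = S j i from (hS.apply j i).symm ▸ rfl]
  ring

lemma bilinC_cast (S : Matrix ι ι ℤ) (x y : ι → ℤ) :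
    bilinC S (fun i => (x i : ℂ)) (fun i => (y i : ℂ)) = (bilinZ S x y : ℂ) := by
  simp [bilinC, bilinZ]

lemma bilinZ_neg_neg (S : Matrix ι ι ℤ) (x : ι → ℤ) :
    bilinZ S (fun i => -(x i)) (fun i => -(x i)) = bilinZ S x x := by
  simp [bilinZ]

end S2Aux

open S2Aux in
/-- A nonzero Jacobi form of index `t` forces `t·(x,y) ∈ ℤ` for all lattice
vectors (equivalently `t·s(L) ∈ ℤ`), and the Heisenberg character is determined by `t`. -/
theorem statement2 {ι : Type*} [Fintype ι] (S : Matrix ι ι ℤ) (hS : IsEvenPosDef S)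
    (k t : ℚ) (ht : 0 < t)
    (χ : SL2Z → ℂ) (hχ : ∀ A, HasFiniteOrder (χ A))
    (ν : (ι → ℤ) → (ι → ℤ) → ℂ) (hν : ∀ x y, HasFiniteOrder (ν x y))
    (f : ℚ × (ι → ℚ) → ℂ) (φ : ℂ → (ι → ℂ) → ℂ)
    (hφ : IsJacobiForm S k t χ ν f φ)
    (hne : ∃ (τ : ℂ) (z : ι → ℂ), 0 < τ.im ∧ φ τ z ≠ 0) :
    (∀ x y : ι → ℤ, ∃ m : ℤ, t * (bilinZ S x y : ℚ) = m) ∧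
    (∀ x y : ι → ℤ,
      ν x y = Complex.exp ((π : ℂ) * I * (t : ℂ)
        * ((bilinZ S x x : ℂ) + (bilinZ S y y : ℂ)))) := by
  classical
  obtain ⟨τ, z, hτ, hD⟩ := hne
  have hπ : (π : ℂ) ≠ 0 := Complex.ofReal_ne_zero.mpr Real.pi_ne_zero
  have h2πI : (2 : ℂ) * π * I ≠ 0 :=
    mul_ne_zero (mul_ne_zero two_ne_zero hπ) Complex.I_ne_zero
  have hνne : ∀ x y, ν x y ≠ 0 := by
    intro x y h
    obtain ⟨N, hN, h1⟩ := hν x y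
    rw [h, zero_pow hN.ne'] at h1
    exact zero_ne_one h1
  have hχne : ∀ A, χ A ≠ 0 := by
    intro A h
    obtain ⟨N, hN, h1⟩ := hχ A
    rw [h, zero_pow hN.ne'] at h1
    exact zero_ne_one h1
  have hτne : τ ≠ 0 := by
    intro h; rw [h] at hτ; simp at hτ
  -- simp facts for the zero lattice vector
  have hb0 : bilinZ S (0 : ι → ℤ) 0 = 0 := by simp [bilinZ]
  have hc0 : ∀ z' : ι → ℂ, bilinC S (fun _ => (0 : ℂ)) z' = 0 := by
    intro z'; simp [bilinC]
  -- the cocycle identity ν x y = ν 0 y * ν x 0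
  have hcoc : ∀ x y : ι → ℤ, ν x y = ν 0 y * ν x 0 := by
    intro x y
    have h1 := hφ.elliptic x y τ hτ z
    have h3 := hφ.elliptic x 0 τ hτ z
    have h2 := hφ.elliptic 0 y τ hτ (fun i => z i + (x i : ℂ) * τ)
    simp only [Pi.zero_apply, Int.cast_zero, zero_mul, add_zero, hb0, hc0, mul_zero,
      zero_add, Complex.exp_zero, mul_one] at h2 h3
    apply mul_right_cancel₀ (mul_ne_zero (Complex.exp_ne_zero
      (-((π : ℂ) * I * (t : ℂ)) * ((bilinZ S x x : ℂ) * τ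
        + 2 * bilinC S (fun i => (x i : ℂ)) z))) hD)
    linear_combination (-1 : ℂ) * h1 + h2 + ν 0 y * h3
  -- integrality: exp(-2πi t (x,y)) = 1
  have hZ : ∀ x y : ι → ℤ, ∃ m : ℤ, (t : ℂ) * (bilinZ S x y : ℂ) = (m : ℂ) := by
    intro x y
    have h1 := hφ.elliptic x y τ hτ z
    have h4 := hφ.elliptic x 0 τ hτ (fun i => z i + (y i : ℂ))
    have h5 := hφ.elliptic 0 y τ hτ z
    simp only [Pi.zero_apply, Int.cast_zero, zero_mul, add_zero, hb0, hc0, mul_zero,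
      zero_add, Complex.exp_zero, mul_one] at h4 h5
    rw [show (fun i => z i + (y i : ℂ) + (x i : ℂ) * τ)
        = (fun i => z i + (x i : ℂ) * τ + (y i : ℂ)) from by funext i; ring] at h4
    rw [bilinC_add_right S (fun i => (x i : ℂ)) z (fun i => (y i : ℂ)),
      bilinC_cast S x y] at h4
    -- h1 : φ τ w = ν x y * exp A1 * D
    -- h4 : φ τ w = ν x 0 * exp A4 * φ τ (z+y)
    -- h5 : φ τ (z+y) = ν 0 y * D
    have eE : Complex.exp (-((π : ℂ) * I * (t : ℂ)) * ((bilinZ S x x : ℂ) * τ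
          + 2 * bilinC S (fun i => (x i : ℂ)) z))
        = Complex.exp (-((π : ℂ) * I * (t : ℂ)) * ((bilinZ S x x : ℂ) * τ
          + 2 * (bilinC S (fun i => (x i : ℂ)) z + (bilinZ S x y : ℂ)))) := by
      apply mul_right_cancel₀ (mul_ne_zero (mul_ne_zero (hνne 0 y) (hνne x 0)) hD)
      linear_combination (-1 : ℂ) * h1 + h4 + ν x 0 * Complex.exp
          (-((π : ℂ) * I * (t : ℂ)) * ((bilinZ S x x : ℂ) * τ
            + 2 * (bilinC S (fun i => (x i : ℂ)) z + (bilinZ S x y : ℂ)))) * h5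
        - Complex.exp (-((π : ℂ) * I * (t : ℂ)) * ((bilinZ S x x : ℂ) * τ
            + 2 * bilinC S (fun i => (x i : ℂ)) z)) * φ τ z * hcoc x y
    have h7 : Complex.exp (-(2 * (π : ℂ) * I * ((t : ℂ) * (bilinZ S x y : ℂ)))) = 1 := by
      apply mul_left_cancel₀ (Complex.exp_ne_zero
        (-((π : ℂ) * I * (t : ℂ)) * ((bilinZ S x x : ℂ) * τ
          + 2 * bilinC S (fun i => (x i : ℂ)) z)))
      rw [← Complex.exp_add, mul_one]
      rw [show -((π : ℂ) * I * (t : ℂ)) * ((bilinZ S x x : ℂ) * τ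
          + 2 * bilinC S (fun i => (x i : ℂ)) z)
          + -(2 * (π : ℂ) * I * ((t : ℂ) * (bilinZ S x y : ℂ)))
        = -((π : ℂ) * I * (t : ℂ)) * ((bilinZ S x x : ℂ) * τ
          + 2 * (bilinC S (fun i => (x i : ℂ)) z + (bilinZ S x y : ℂ))) from by ring]
      exact eE.symm
    rw [Complex.exp_eq_one_iff] at h7
    obtain ⟨n, hn⟩ := h7
    refine ⟨-n, ?_⟩
    have := mul_left_cancel₀ h2πI (show (2 * (π : ℂ) * I) * ((t : ℂ) * (bilinZ S x y : ℂ))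
        = (2 * (π : ℂ) * I) * ((-n : ℤ) : ℂ) from by push_cast; linear_combination (-1 : ℂ) * hn)
    exact this
  -- T transformation
  have hdetT : Matrix.det !![(1:ℤ),1;0,1] = 1 := by norm_num [Matrix.det_fin_two_of]
  have hT : ∀ w : ι → ℂ, φ (τ + 1) w = χ ⟨!![1,1;0,1], hdetT⟩ * φ τ w := by
    intro w
    have h := hφ.modular ⟨!![1,1;0,1], hdetT⟩ τ hτ w
    norm_num at h
    exact h
  have hτ1 : 0 < (τ + 1).im := by simpa using hτ
  have hν0 : ∀ x : ι → ℤ, ν 0 x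
      = Complex.exp (-((π : ℂ) * I * (t : ℂ)) * (bilinZ S x x : ℂ)) := by
    intro x
    have ha := hφ.elliptic x 0 (τ + 1) hτ1 z
    simp only [Pi.zero_apply, Int.cast_zero, add_zero] at ha
    rw [show (fun i => z i + (x i : ℂ) * (τ + 1)) = (fun i => z i + (x i : ℂ) * τ + (x i : ℂ))
      from by funext i; ring] at ha
    rw [hT, hT] at ha
    have hb := hφ.elliptic x x τ hτ z
    have expfact : Complex.exp (-((π : ℂ) * I * (t : ℂ)) * ((bilinZ S x x : ℂ) * (τ + 1)
          + 2 * bilinC S (fun i => (x i : ℂ)) z))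
        = Complex.exp (-((π : ℂ) * I * (t : ℂ)) * (bilinZ S x x : ℂ))
          * Complex.exp (-((π : ℂ) * I * (t : ℂ)) * ((bilinZ S x x : ℂ) * τ
            + 2 * bilinC S (fun i => (x i : ℂ)) z)) := by
      rw [← Complex.exp_add]; congr 1; ring
    apply mul_right_cancel₀ (mul_ne_zero (hνne x 0) (mul_ne_zero (Complex.exp_ne_zero
      (-((π : ℂ) * I * (t : ℂ)) * ((bilinZ S x x : ℂ) * τ
        + 2 * bilinC S (fun i => (x i : ℂ)) z)))
      (mul_ne_zero (hχne ⟨!![1,1;0,1], hdetT⟩) hD)))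
    linear_combination (-(Complex.exp (-((π : ℂ) * I * (t : ℂ)) * ((bilinZ S x x : ℂ) * τ
          + 2 * bilinC S (fun i => (x i : ℂ)) z)) * χ ⟨!![1,1;0,1], hdetT⟩ * φ τ z)) * hcoc x x
      + (-(χ ⟨!![1,1;0,1], hdetT⟩)) * hb + ha
      + (ν x 0 * χ ⟨!![1,1;0,1], hdetT⟩ * φ τ z) * expfact
  -- S transformation
  have hdetS : Matrix.det !![(0:ℤ),-1;1,0] = 1 := by norm_num [Matrix.det_fin_two_of]
  have hSmod : ∀ w : ι → ℂ, φ (-1 / τ) (fun i => w i / τ)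
      = χ ⟨!![0,-1;1,0], hdetS⟩ * τ ^ (k : ℂ)
        * Complex.exp ((π : ℂ) * I * (t : ℂ) * bilinC S w w / τ) * φ τ w := by
    intro w
    have h := hφ.modular ⟨!![0,-1;1,0], hdetS⟩ τ hτ w
    norm_num at h
    exact h
  have hτS : 0 < ((-1 : ℂ) / τ).im := by
    have him : ((-1 : ℂ) / τ).im = τ.im / Complex.normSq τ := by
      rw [div_eq_mul_inv, neg_one_mul, Complex.neg_im, Complex.inv_im]
      ring
    rw [him]
    exact div_pos hτ (Complex.normSq_pos.mpr hτne)
  have hcpow : (τ : ℂ) ^ (k : ℂ) ≠ 0 := by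
    simp [Complex.cpow_eq_zero_iff, hτne]
  have hνneg : ∀ y : ι → ℤ, ν (fun i => -(y i)) 0 = ν 0 y := by
    intro y
    have hc := hφ.elliptic (fun i => -(y i)) 0 (-1 / τ) hτS (fun i => z i / τ)
    simp only [Pi.zero_apply, Int.cast_zero, Int.cast_neg, add_zero] at hc
    rw [show (fun i => z i / τ + -((y i : ℂ)) * (-1 / τ))
        = (fun i => (z i + (y i : ℂ)) / τ) from by
      funext i; field_simp] at hc
    rw [bilinZ_neg_neg, bilinC_neg_left, bilinC_div_right] at hc
    have hm1 := hSmod z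
    have hm2 : φ (-1 / τ) (fun i => (z i + (y i : ℂ)) / τ)
        = χ ⟨!![0,-1;1,0], hdetS⟩ * τ ^ (k : ℂ)
          * Complex.exp ((π : ℂ) * I * (t : ℂ)
              * bilinC S (fun i => z i + (y i : ℂ)) (fun i => z i + (y i : ℂ)) / τ)
          * φ τ (fun i => z i + (y i : ℂ)) := hSmod (fun i => z i + (y i : ℂ))
    have hBuu : bilinC S (fun i => z i + (y i : ℂ)) (fun i => z i + (y i : ℂ))
        = bilinC S z z + 2 * bilinC S (fun i => (y i : ℂ)) z + (bilinZ S y y : ℂ) := by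
      rw [bilinC_add_left, bilinC_add_right, bilinC_add_right, bilinC_cast,
        bilinC_symm hS.symm z (fun i => (y i : ℂ))]
      ring
    rw [hBuu] at hm2
    have h5 := hφ.elliptic 0 y τ hτ z
    simp only [Pi.zero_apply, Int.cast_zero, zero_mul, add_zero, hb0, hc0, mul_zero,
      zero_add, Complex.exp_zero, mul_one] at h5
    have hca : φ (-1 / τ) (fun i => (z i + (y i : ℂ)) / τ)
        = ν (fun i => -(y i)) 0
          * Complex.exp (-((π : ℂ) * I * (t : ℂ)) * ((bilinZ S y y : ℂ) * (-1 / τ)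
              + 2 * -(bilinC S (fun i => (y i : ℂ)) z / τ)))
          * (χ ⟨!![0,-1;1,0], hdetS⟩ * τ ^ (k : ℂ)
            * Complex.exp ((π : ℂ) * I * (t : ℂ) * bilinC S z z / τ) * φ τ z) := by
      rw [← hm1]; exact hc
    have expfact2 : Complex.exp (-((π : ℂ) * I * (t : ℂ)) * ((bilinZ S y y : ℂ) * (-1 / τ)
            + 2 * -(bilinC S (fun i => (y i : ℂ)) z / τ)))
          * Complex.exp ((π : ℂ) * I * (t : ℂ) * bilinC S z z / τ)
        = Complex.exp ((π : ℂ) * I * (t : ℂ)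
            * (bilinC S z z + 2 * bilinC S (fun i => (y i : ℂ)) z + (bilinZ S y y : ℂ)) / τ) := by
      rw [← Complex.exp_add]; congr 1; ring
    apply mul_right_cancel₀ (mul_ne_zero (Complex.exp_ne_zero
        ((π : ℂ) * I * (t : ℂ)
          * (bilinC S z z + 2 * bilinC S (fun i => (y i : ℂ)) z + (bilinZ S y y : ℂ)) / τ))
      (mul_ne_zero (mul_ne_zero (hχne ⟨!![0,-1;1,0], hdetS⟩) hcpow) hD))
    linear_combination (-1 : ℂ) * hca + hm2
      + (χ ⟨!![0,-1;1,0], hdetS⟩ * τ ^ (k : ℂ)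
          * Complex.exp ((π : ℂ) * I * (t : ℂ)
            * (bilinC S z z + 2 * bilinC S (fun i => (y i : ℂ)) z + (bilinZ S y y : ℂ)) / τ)) * h5
      + (-(ν (fun i => -(y i)) 0 * χ ⟨!![0,-1;1,0], hdetS⟩ * τ ^ (k : ℂ) * φ τ z)) * expfact2
  -- ν x 0 is also determined
  have hνx0 : ∀ x : ι → ℤ, ν x 0
      = Complex.exp (-((π : ℂ) * I * (t : ℂ)) * (bilinZ S x x : ℂ)) := by
    intro x
    have h := hνneg (fun i => -(x i))
    rw [show (fun i => -(-(x i))) = x from by funext i; ring] at h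
    rw [h, hν0 (fun i => -(x i)), bilinZ_neg_neg]
  refine ⟨fun x y => ?_, fun x y => ?_⟩
  · obtain ⟨m, hm⟩ := hZ x y
    exact ⟨m, by exact_mod_cast hm⟩
  · obtain ⟨mx, hmx⟩ := hZ x x
    obtain ⟨my, hmy⟩ := hZ y y
    rw [hcoc x y, hν0 y, hνx0 x]
    calc Complex.exp (-((π : ℂ) * I * (t : ℂ)) * (bilinZ S y y : ℂ))
          * Complex.exp (-((π : ℂ) * I * (t : ℂ)) * (bilinZ S x x : ℂ))
        = Complex.exp ((π : ℂ) * I * (t : ℂ) * ((bilinZ S x x : ℂ) + (bilinZ S y y : ℂ)))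
          * (Complex.exp (((-mx : ℤ) : ℂ) * (2 * (π : ℂ) * I))
            * Complex.exp (((-my : ℤ) : ℂ) * (2 * (π : ℂ) * I))) := by
          rw [← Complex.exp_add, ← Complex.exp_add, ← Complex.exp_add]
          congr 1
          push_cast
          rw [← hmx, ← hmy]
          ring
      _ = Complex.exp ((π : ℂ) * I * (t : ℂ)
            * ((bilinZ S x x : ℂ) + (bilinZ S y y : ℂ))) := by
          rw [Complex.exp_int_mul_two_pi_mul_I, Complex.exp_int_mul_two_pi_mul_I]
          ring
end
end

section
/- Let L be an even positive definite lattice of rank n with bilinear form (·,·), extended ℝ- and ℂ-bilinearly. For Z = (ω,𝔷,τ) in the tube domain H(L) set ṽ(Z) := Im(ω) − (Im 𝔷, Im 𝔷)/(2 Im τ), so ṽ(Z) > 0. Then for every A = (a,b;c,d) ∈ SL₂(ℝ) the point {A}⟨Z⟩ := (ω − c(𝔷,𝔷)/(2(cτ+d)), 𝔷/(cτ+d), (aτ+b)/(cτ+d)) again lies in H(L) and satisfies ṽ({A}⟨Z⟩) = ṽ(Z), and for all x,y ∈ L⊗ℝ = ℝⁿ and r ∈ ℝ the point [x,y;r]⟨Z⟩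 := (ω + (1/2)(x,x)τ + (x,𝔷) + (1/2)(x,y) + r, 𝔷 + xτ + y, τ) again lies in H(L) and satisfies ṽ([x,y;r]⟨Z⟩) = ṽ(Z). -/
open Complex Matrix
open scoped Real BigOperators Classical

noncomputable section

section Aux

variable {ι : Type*} [Fintype ι] (S : Matrix ι ι ℤ)

lemma bilinR_comb (a b c d : ℝ) (f g : ι → ℝ) :
    bilinR S (fun i => a * f i + b * g i) (fun i => c * f i + d * g i)
      = a*c * bilinR S f f + a*d * bilinR S f g + b*c * bilinR S g f
        + b*d * bilinR S g g := by
  have h : ∀ i j, (a*f i + b*g i) * (S i j : ℝ) * (c*f j + d*g j)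
      = a*c*(f i * S i j * f j) + a*d*(f i * S i j * g j)
        + b*c*(g i * S i j * f j) + b*d*(g i * S i j * g j) := by intros; ring
  simp only [bilinR, h, Finset.sum_add_distrib, ← Finset.mul_sum]

lemma bilinR_symm (hs : S.IsSymm) (f g : ι → ℝ) : bilinR S f g = bilinR S g f := by
  simp only [bilinR]
  rw [Finset.sum_comm]
  refine Finset.sum_congr rfl fun i _ => Finset.sum_congr rfl fun j _ => ?_
  rw [← hs.apply i j]
  ring

lemma bilinC_im (z w : ι → ℂ) : (bilinC S z w).im
    = bilinR S (fun i => (z i).re) (fun i => (w i).im)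
      + bilinR S (fun i => (z i).im) (fun i => (w i).re) := by
  simp only [bilinC, bilinR, Complex.im_sum, Complex.mul_im, Complex.mul_re,
    Complex.intCast_re, Complex.intCast_im, ← Finset.sum_add_distrib]
  refine Finset.sum_congr rfl fun i _ => Finset.sum_congr rfl fun j _ => ?_
  ring

lemma bilinC_re (z w : ι → ℂ) : (bilinC S z w).re
    = bilinR S (fun i => (z i).re) (fun i => (w i).re)
      - bilinR S (fun i => (z i).im) (fun i => (w i).im) := by
  simp only [bilinC, bilinR, Complex.re_sum, Complex.mul_im, Complex.mul_re,
    Complex.intCast_re, Complex.intCast_im, ← Finset.sum_sub_distrib]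
  refine Finset.sum_congr rfl fun i _ => Finset.sum_congr rfl fun j _ => ?_
  ring

lemma bilinR_nonneg (hS : IsEvenPosDef S) (x : ι → ℝ) : 0 ≤ bilinR S x x := by
  have hcont : Continuous (fun x : ι → ℝ => bilinR S x x) := by
    unfold bilinR
    exact continuous_finset_sum _ fun i _ => continuous_finset_sum _ fun j _ =>
      ((continuous_apply i).mul continuous_const).mul (continuous_apply j)
  have hcl : IsClosed {x : ι → ℝ | 0 ≤ bilinR S x x} :=
    isClosed_le continuous_const hcont
  have hd : Dense (Set.pi Set.univ fun _ : ι => Set.range ((↑) : ℚ → ℝ)) :=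
    dense_pi Set.univ (fun _ _ => Rat.denseRange_cast)
  have hsub : (Set.pi Set.univ fun _ : ι => Set.range ((↑) : ℚ → ℝ))
      ⊆ {x : ι → ℝ | 0 ≤ bilinR S x x} := by
    intro y hy
    choose q hq using fun i => hy i (Set.mem_univ i)
    have hy' : y = fun i => ((q i : ℝ)) := by funext i; exact (hq i).symm
    subst hy'
    have hcast : bilinR S (fun i => ((q i : ℝ))) (fun i => ((q i : ℝ)))
        = ((bilinQ S q q : ℚ) : ℝ) := by
      simp only [bilinR, bilinQ]; push_cast; rfl
    rw [Set.mem_setOf_eq, hcast]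
    rcases eq_or_ne q 0 with h | h
    · simp [h, bilinQ]
    · exact_mod_cast (hS.posdef q h).le
  have : (Set.univ : Set (ι → ℝ)) ⊆ {x : ι → ℝ | 0 ≤ bilinR S x x} :=
    hd.closure_eq ▸ closure_minimal hsub hcl
  exact this (Set.mem_univ x)

end Aux

/-- The quantity `ṽ(Z) = Im ω − (Im 𝔷, Im 𝔷)/(2 Im τ)` on the tube domain
`H(L)` is invariant under the real Jacobi group: both the `SL₂(ℝ)`-part and the real
Heisenberg part preserve `H(L)` and preserve `ṽ`. -/
theorem statement5 {ι : Type*} [Fintype ι] (S : Matrix ι ι ℤ) (hS : IsEvenPosDef S)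
    (ω τ : ℂ) (z : ι → ℂ) (hω : 0 < ω.im) (hτ : 0 < τ.im)
    (hZ : 0 < 2 * ω.im * τ.im
        - bilinR S (fun i => (z i).im) (fun i => (z i).im)) :
    (∀ A : Matrix.SpecialLinearGroup (Fin 2) ℝ,
      (0 < (ω - (A.1 1 0 : ℂ) * bilinC S z z
              / (2 * ((A.1 1 0 : ℂ) * τ + (A.1 1 1 : ℂ)))).im ∧
       0 < (((A.1 0 0 : ℂ) * τ + (A.1 0 1 : ℂ))
              / ((A.1 1 0 : ℂ) * τ + (A.1 1 1 : ℂ))).im ∧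
       0 < 2 * (ω - (A.1 1 0 : ℂ) * bilinC S z z
              / (2 * ((A.1 1 0 : ℂ) * τ + (A.1 1 1 : ℂ)))).im
            * (((A.1 0 0 : ℂ) * τ + (A.1 0 1 : ℂ))
              / ((A.1 1 0 : ℂ) * τ + (A.1 1 1 : ℂ))).im
            - bilinR S (fun i => (z i / ((A.1 1 0 : ℂ) * τ + (A.1 1 1 : ℂ))).im)
                (fun i => (z i / ((A.1 1 0 : ℂ) * τ + (A.1 1 1 : ℂ))).im)) ∧
      (ω - (A.1 1 0 : ℂ) * bilinC S z z
          / (2 * ((A.1 1 0 : ℂ) * τ + (A.1 1 1 : ℂ)))).im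
        - bilinR S (fun i => (z i / ((A.1 1 0 : ℂ) * τ + (A.1 1 1 : ℂ))).im)
            (fun i => (z i / ((A.1 1 0 : ℂ) * τ + (A.1 1 1 : ℂ))).im)
          / (2 * (((A.1 0 0 : ℂ) * τ + (A.1 0 1 : ℂ))
              / ((A.1 1 0 : ℂ) * τ + (A.1 1 1 : ℂ))).im)
        = ω.im - bilinR S (fun i => (z i).im) (fun i => (z i).im) / (2 * τ.im)) ∧
    (∀ (x y : ι → ℝ) (r : ℝ),
      (0 < (ω + (bilinR S x x : ℂ) * τ / 2 + bilinC S (fun i => (x i : ℂ)) z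
              + ((bilinR S x y / 2 : ℝ) : ℂ) + (r : ℂ)).im ∧
       0 < τ.im ∧
       0 < 2 * (ω + (bilinR S x x : ℂ) * τ / 2 + bilinC S (fun i => (x i : ℂ)) z
              + ((bilinR S x y / 2 : ℝ) : ℂ) + (r : ℂ)).im * τ.im
            - bilinR S (fun i => (z i + (x i : ℂ) * τ + (y i : ℂ)).im)
                (fun i => (z i + (x i : ℂ) * τ + (y i : ℂ)).im)) ∧
      (ω + (bilinR S x x : ℂ) * τ / 2 + bilinC S (fun i => (x i : ℂ)) z
          + ((bilinR S x y / 2 : ℝ) : ℂ) + (r : ℂ)).im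
        - bilinR S (fun i => (z i + (x i : ℂ) * τ + (y i : ℂ)).im)
            (fun i => (z i + (x i : ℂ) * τ + (y i : ℂ)).im) / (2 * τ.im)
        = ω.im - bilinR S (fun i => (z i).im) (fun i => (z i).im) / (2 * τ.im)) := by
  
  have hτ0 : τ.im ≠ 0 := ne_of_gt hτ
  have hv : 0 < ω.im - bilinR S (fun i => (z i).im) (fun i => (z i).im) / (2 * τ.im) := by
    rw [sub_pos, div_lt_iff₀ (by positivity)]
    linarith
  constructor
  · intro A
    set a : ℝ := A.1 0 0 with ha
    set b : ℝ := A.1 0 1 with hb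
    set c : ℝ := A.1 1 0 with hc
    set d : ℝ := A.1 1 1 with hd
    have hdet : a * d - b * c = 1 := by
      have h2 := A.2
      rw [Matrix.det_fin_two] at h2
      exact h2
    set j : ℂ := (c : ℂ) * τ + (d : ℂ) with hj_def
    have hjre : j.re = c * τ.re + d := by simp [hj_def]
    have hjim : j.im = c * τ.im := by simp [hj_def]
    have hj : j ≠ 0 := by
      intro h0
      have h1 : c * τ.im = 0 := by rw [← hjim, h0, Complex.zero_im]
      have hc0 : c = 0 := by
        rcases mul_eq_zero.mp h1 with h | h
        · exact h
        · exact absurd h hτ0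
      have hd0 : d = 0 := by
        have := hjre
        rw [h0, Complex.zero_re, hc0] at this
        linarith [this.symm]
      rw [hc0, hd0] at hdet
      norm_num at hdet
    set n : ℝ := Complex.normSq j with hn_def
    have hn : 0 < n := Complex.normSq_pos.mpr hj
    have hn0 : n ≠ 0 := ne_of_gt hn
    have hnval : n = j.re ^ 2 + j.im ^ 2 := by
      rw [hn_def, Complex.normSq_apply]; ring
    -- Im of transformed τ
    have hτ' : (((a : ℂ) * τ + (b : ℂ)) / j).im = τ.im / n := by
      have hnum : (a * τ.im) * j.re - (a * τ.re + b) * j.im = τ.im := by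
        rw [hjre, hjim]; linear_combination τ.im * hdet
      have e1 : ((a : ℂ) * τ + (b : ℂ)).im = a * τ.im := by simp
      have e2 : ((a : ℂ) * τ + (b : ℂ)).re = a * τ.re + b := by simp
      rw [Complex.div_im, ← hn_def, e1, e2, div_sub_div_same, hnum]
    -- Im of transformed ω
    have hω' : (ω - (c : ℂ) * bilinC S z z / (2 * j)).im
        = ω.im - c * ((bilinC S z z).im * j.re - (bilinC S z z).re * j.im) / (2 * n) := by
      rw [Complex.sub_im, Complex.div_im]
      simp only [Complex.mul_im, Complex.mul_re, Complex.ofReal_re, Complex.ofReal_im,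
        Complex.normSq_mul, Complex.re_ofNat, Complex.im_ofNat]
      rw [show Complex.normSq (2 : ℂ) = 4 by norm_num [Complex.normSq_apply], ← hn_def]
      field_simp
      ring
    -- transformed z
    have hwfun : (fun i => (z i / j).im)
        = fun i => (j.re / n) * (z i).im + (-(j.im) / n) * (z i).re := by
      funext i
      rw [Complex.div_im, ← hn_def]
      ring
    have hBww : bilinR S (fun i => (z i / j).im) (fun i => (z i / j).im)
        = (j.re/n)*(j.re/n) * bilinR S (fun i => (z i).im) (fun i => (z i).im)
          + (j.re/n)*(-(j.im)/n) * bilinR S (fun i => (z i).im) (fun i => (z i).re)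
          + (-(j.im)/n)*(j.re/n) * bilinR S (fun i => (z i).re) (fun i => (z i).im)
          + (-(j.im)/n)*(-(j.im)/n) * bilinR S (fun i => (z i).re) (fun i => (z i).re) := by
      rw [hwfun, bilinR_comb]
    have hsym : bilinR S (fun i => (z i).im) (fun i => (z i).re)
        = bilinR S (fun i => (z i).re) (fun i => (z i).im) := bilinR_symm S hS.symm _ _
    have hWim : (bilinC S z z).im
        = 2 * bilinR S (fun i => (z i).re) (fun i => (z i).im) := by
      rw [bilinC_im, hsym]; ring
    have hWre : (bilinC S z z).re
        = bilinR S (fun i => (z i).re) (fun i => (z i).re)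
          - bilinR S (fun i => (z i).im) (fun i => (z i).im) := bilinC_re S z z
    set Buu : ℝ := bilinR S (fun i => (z i).re) (fun i => (z i).re) with hBuu
    set Buv : ℝ := bilinR S (fun i => (z i).re) (fun i => (z i).im) with hBuv
    set Bvv : ℝ := bilinR S (fun i => (z i).im) (fun i => (z i).im) with hBvv
    -- the key invariance equality
    have key : (ω - (c : ℂ) * bilinC S z z / (2 * j)).im
        - bilinR S (fun i => (z i / j).im) (fun i => (z i / j).im)
          / (2 * (((a : ℂ) * τ + (b : ℂ)) / j).im)
        = ω.im - Bvv / (2 * τ.im) := by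
      have hnval' : n = j.re ^ 2 + (c * τ.im) ^ 2 := by rw [hnval, hjim]
      have hp : j.re ^ 2 + (c * τ.im) ^ 2 ≠ 0 := by rw [← hnval']; exact hn0
      rw [hω', hτ', hBww, hsym, hWim, hWre, hjim, hnval']
      field_simp
      have hp2 : τ.im ^ 2 * c ^ 2 + j.re ^ 2 ≠ 0 := by
        convert hp using 1; ring
      linear_combination (-Bvv) * mul_inv_cancel₀ hp2
    have hwnn : 0 ≤ bilinR S (fun i => (z i / j).im) (fun i => (z i / j).im) :=
      bilinR_nonneg S hS (fun i => (z i / j).im)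
    have hτ'pos : 0 < (((a : ℂ) * τ + (b : ℂ)) / j).im := by
      rw [hτ']; positivity
    have hω'pos : 0 < (ω - (c : ℂ) * bilinC S z z / (2 * j)).im := by
      have h2 : 0 ≤ bilinR S (fun i => (z i / j).im) (fun i => (z i / j).im)
          / (2 * (((a : ℂ) * τ + (b : ℂ)) / j).im) := by positivity
      linarith [key, hv]
    refine ⟨⟨hω'pos, hτ'pos, ?_⟩, key⟩
    have heq : 2 * (ω - (c : ℂ) * bilinC S z z / (2 * j)).im
          * (((a : ℂ) * τ + (b : ℂ)) / j).im
        - bilinR S (fun i => (z i / j).im) (fun i => (z i / j).im)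
        = 2 * (((a : ℂ) * τ + (b : ℂ)) / j).im
          * ((ω - (c : ℂ) * bilinC S z z / (2 * j)).im
            - bilinR S (fun i => (z i / j).im) (fun i => (z i / j).im)
              / (2 * (((a : ℂ) * τ + (b : ℂ)) / j).im)) := by
      field_simp
    rw [heq, key]
    exact mul_pos (by positivity) hv
  · intro x y r
    set Bxx : ℝ := bilinR S x x with hBxx
    have hzero : bilinR S (fun i => ((x i : ℂ)).im) (fun i => (z i).re) = 0 := by
      simp [bilinR]
    have him : (ω + (Bxx : ℂ) * τ / 2 + bilinC S (fun i => (x i : ℂ)) z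
          + ((bilinR S x y / 2 : ℝ) : ℂ) + (r : ℂ)).im
        = ω.im + Bxx * τ.im / 2 + bilinR S x (fun i => (z i).im) := by
      rw [Complex.add_im, Complex.add_im, Complex.add_im, Complex.ofReal_im,
        Complex.ofReal_im, bilinC_im]
      have h1 : ((Bxx : ℂ) * τ / 2).im = Bxx * τ.im / 2 := by
        rw [Complex.div_im]
        simp [Complex.mul_im, Complex.mul_re, Complex.normSq_apply]
        ring
      have h2 : bilinR S (fun i => ((x i : ℂ)).re) (fun i => (z i).im)
          = bilinR S x (fun i => (z i).im) := by simp [bilinR]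
      rw [Complex.add_im, h1, h2, hzero]
      ring
    have hzfun : (fun i => (z i + (x i : ℂ) * τ + (y i : ℂ)).im)
        = fun i => (1 : ℝ) * (z i).im + τ.im * x i := by
      funext i
      simp [Complex.add_im, Complex.mul_im]
      ring
    have hBw : bilinR S (fun i => (z i + (x i : ℂ) * τ + (y i : ℂ)).im)
          (fun i => (z i + (x i : ℂ) * τ + (y i : ℂ)).im)
        = 1*1 * bilinR S (fun i => (z i).im) (fun i => (z i).im)
          + 1*τ.im * bilinR S (fun i => (z i).im) x
          + τ.im*1 * bilinR S x (fun i => (z i).im)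
          + τ.im*τ.im * Bxx := by
      rw [hzfun, bilinR_comb]
    have hsym : bilinR S (fun i => (z i).im) x = bilinR S x (fun i => (z i).im) :=
      bilinR_symm S hS.symm _ _
    set Bvv : ℝ := bilinR S (fun i => (z i).im) (fun i => (z i).im) with hBvv
    set Bxv : ℝ := bilinR S x (fun i => (z i).im) with hBxv
    have key : (ω + (Bxx : ℂ) * τ / 2 + bilinC S (fun i => (x i : ℂ)) z
          + ((bilinR S x y / 2 : ℝ) : ℂ) + (r : ℂ)).im
        - bilinR S (fun i => (z i + (x i : ℂ) * τ + (y i : ℂ)).im)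
            (fun i => (z i + (x i : ℂ) * τ + (y i : ℂ)).im) / (2 * τ.im)
        = ω.im - Bvv / (2 * τ.im) := by
      rw [him, hBw, hsym]
      field_simp
      ring
    have hwnn : 0 ≤ bilinR S (fun i => (z i + (x i : ℂ) * τ + (y i : ℂ)).im)
        (fun i => (z i + (x i : ℂ) * τ + (y i : ℂ)).im) :=
      bilinR_nonneg S hS _
    have hωpos : 0 < (ω + (Bxx : ℂ) * τ / 2 + bilinC S (fun i => (x i : ℂ)) z
          + ((bilinR S x y / 2 : ℝ) : ℂ) + (r : ℂ)).im := by
      have h2 : 0 ≤ bilinR S (fun i => (z i + (x i : ℂ) * τ + (y i : ℂ)).im)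
          (fun i => (z i + (x i : ℂ) * τ + (y i : ℂ)).im) / (2 * τ.im) := by positivity
      linarith [key, hv]
    refine ⟨⟨hωpos, hτ, ?_⟩, key⟩
    have heq : 2 * (ω + (Bxx : ℂ) * τ / 2 + bilinC S (fun i => (x i : ℂ)) z
          + ((bilinR S x y / 2 : ℝ) : ℂ) + (r : ℂ)).im * τ.im
        - bilinR S (fun i => (z i + (x i : ℂ) * τ + (y i : ℂ)).im)
            (fun i => (z i + (x i : ℂ) * τ + (y i : ℂ)).im)
        = 2 * τ.im * ((ω + (Bxx : ℂ) * τ / 2 + bilinC S (fun i => (x i : ℂ)) z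
          + ((bilinR S x y / 2 : ℝ) : ℂ) + (r : ℂ)).im
        - bilinR S (fun i => (z i + (x i : ℂ) * τ + (y i : ℂ)).im)
            (fun i => (z i + (x i : ℂ) * τ + (y i : ℂ)).im) / (2 * τ.im)) := by
      field_simp
    rw [heq, key]
    exact mul_pos (by positivity) hv
end
end

section
/- Let L be an even positive definite lattice, M ⊂ L a sublattice with 0 < rank M < rank L, M^⊥ = {x ∈ L : (x,M) = 0}, and let φ ∈ J_{k,L;t}(χ₁ × ν) be a holomorphic Jacobi form with Fourier coefficients f(n,l). For l ∈ (1/2)L^∨ let l_⊥ denote the orthogonal projection of l onto M^⊥⊗ℚ. If the pullback φ|_M(τ,𝔷_m) := φ(τ, 𝔷_m ⊕ 0) is not identically zero, then Ord(φ|_M) ≥ min{(l_⊥, l_⊥) : f(n,l) ≠ 0}. In particular, if l_⊥ ≠ 0 for every pair (n,l) with f(n,l) ≠ 0, then φ|_M is a Jacobi cusp form or identically zero. -/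
open Complex Matrix
open scoped Real BigOperators Classical

noncomputable section

open MeasureTheory Filter Topology in
/-- Uniqueness of one-variable Bohr/Fourier expansions: the fiber sums vanish. -/
lemma stmt11_one_var {J : Type*} [Countable J] (a : J → ℂ) (β : J → ℝ)
    (ha : Summable fun j => ‖a j‖)
    (h : ∀ s : ℝ, HasSum (fun j => a j * Complex.exp (Complex.I * (β j : ℂ) * (s : ℂ))) 0)
    (β₀ : ℝ) :
    ∑' j : {j : J | β j = β₀}, a (j : J) = 0 := by
  set γ : J → ℝ := fun j => β j - β₀ with hγ
  have key : ∀ s : ℝ, HasSum (fun j => a j * Complex.exp (Complex.I * (γ j : ℂ) * (s : ℂ))) 0 := by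
    intro s
    have h2 := (h s).mul_right (Complex.exp (-(Complex.I * (β₀ : ℂ) * (s : ℂ))))
    rw [zero_mul] at h2
    have e : (fun j => a j * Complex.exp (Complex.I * (γ j : ℂ) * (s : ℂ)))
        = fun j => a j * Complex.exp (Complex.I * (β j : ℂ) * (s : ℂ)) *
            Complex.exp (-(Complex.I * (β₀ : ℂ) * (s : ℂ))) := by
      funext j
      rw [mul_assoc (a j), ← Complex.exp_add]
      congr 2
      push_cast [hγ]
      ring
    rw [e]
    exact h2
  have hnorm : ∀ j (s : ℝ), ‖a j * Complex.exp (Complex.I * (γ j : ℂ) * (s : ℂ))‖ = ‖a j‖ := by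
    intro j s
    rw [norm_mul]
    have h1 : ‖Complex.exp (Complex.I * (γ j : ℂ) * (s : ℂ))‖ = 1 := by
      rw [Complex.norm_exp]
      have h0 : (Complex.I * (γ j : ℂ) * (s : ℂ)).re = 0 := by simp
      rw [h0, Real.exp_zero]
    rw [h1, mul_one]
  set c : ℝ → J → ℂ := fun T j =>
    (1/(T:ℂ)) * ∫ s in (0:ℝ)..T, a j * Complex.exp (Complex.I * (γ j : ℂ) * (s : ℂ)) with hc
  have hzero : ∀ T : ℝ, 0 < T → ∑' j, c T j = 0 := by
    intro T hT
    have hmeas : ∀ j, AEStronglyMeasurable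
        (fun s : ℝ => a j * Complex.exp (Complex.I * (γ j : ℂ) * (s : ℂ)))
        (volume.restrict (Set.Ioc (0:ℝ) T)) := fun j =>
      (Continuous.aestronglyMeasurable (by continuity))
    have hsummn : Summable (fun j => ‖a j‖₊) := by
      rw [← NNReal.summable_coe]
      exact ha
    have hlint : ∑' j, ∫⁻ s in Set.Ioc (0:ℝ) T,
        ‖a j * Complex.exp (Complex.I * (γ j : ℂ) * (s : ℂ))‖₊ ≠ ⊤ := by
      have h1 : ∀ j, ∫⁻ s in Set.Ioc (0:ℝ) T,
          (‖a j * Complex.exp (Complex.I * (γ j : ℂ) * (s : ℂ))‖₊ : ENNReal)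
          = (‖a j‖₊ : ENNReal) * ENNReal.ofReal T := by
        intro j
        have h2 : (fun s : ℝ => (‖a j * Complex.exp (Complex.I * (γ j : ℂ) * (s : ℂ))‖₊ : ENNReal))
            = fun _ => (‖a j‖₊ : ENNReal) := by
          funext s
          congr 1
          ext
          exact hnorm j s
        rw [lintegral_congr (fun s => congrFun h2 s), setLIntegral_const, Real.volume_Ioc]
        rw [sub_zero]
      rw [tsum_congr h1, ENNReal.tsum_mul_right]
      exact ENNReal.mul_ne_top (ENNReal.tsum_coe_ne_top_iff_summable.mpr hsummn)
        ENNReal.ofReal_ne_top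
    have hint : ∫ s in Set.Ioc (0:ℝ) T,
        (∑' j, a j * Complex.exp (Complex.I * (γ j : ℂ) * (s : ℂ)))
        = ∑' j, ∫ s in Set.Ioc (0:ℝ) T, a j * Complex.exp (Complex.I * (γ j : ℂ) * (s : ℂ)) :=
      integral_tsum hmeas hlint
    have hin0 : ∀ s : ℝ, (∑' j, a j * Complex.exp (Complex.I * (γ j : ℂ) * (s : ℂ))) = 0 :=
      fun s => (key s).tsum_eq
    rw [integral_congr_ae (Filter.Eventually.of_forall (fun s => hin0 s)), integral_zero] at hint
    have : ∑' j, c T j = (1/(T:ℂ)) * ∑' j, ∫ s in (0:ℝ)..T,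
        a j * Complex.exp (Complex.I * (γ j : ℂ) * (s : ℂ)) := tsum_mul_left
    rw [this]
    have he : ∀ j, ∫ s in (0:ℝ)..T, a j * Complex.exp (Complex.I * (γ j : ℂ) * (s : ℂ))
        = ∫ s in Set.Ioc (0:ℝ) T, a j * Complex.exp (Complex.I * (γ j : ℂ) * (s : ℂ)) :=
      fun j => intervalIntegral.integral_of_le hT.le
    rw [tsum_congr he, ← hint, mul_zero]
  -- limit of each coefficient
  set g : J → ℂ := fun j => if β j = β₀ then a j else 0 with hg
  have hlim : ∀ j, Tendsto (fun T => c T j) atTop (𝓝 (g j)) := by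
    intro j
    rcases eq_or_ne (β j) β₀ with hb | hb
    · have hγ0 : γ j = 0 := by rw [hγ]; simp [hb]
      have hev : ∀ᶠ T in (atTop : Filter ℝ), c T j = a j := by
        filter_upwards [eventually_gt_atTop (0:ℝ)] with T hT
        have : (fun s : ℝ => a j * Complex.exp (Complex.I * (γ j : ℂ) * (s : ℂ)))
            = fun _ => a j := by
          funext s; rw [hγ0]; push_cast; rw [mul_zero, zero_mul, Complex.exp_zero, mul_one]
        rw [hc]
        simp only [this, intervalIntegral.integral_const, sub_zero]
        rw [Complex.real_smul, ← mul_assoc, one_div,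
          inv_mul_cancel₀ (by exact_mod_cast hT.ne' : (T:ℂ) ≠ 0), one_mul]
      rw [hg]
      simp only [hb, if_pos rfl]
      exact (tendsto_congr' hev).mpr tendsto_const_nhds
    · have hγ0 : (γ j : ℝ) ≠ 0 := by rw [hγ]; simpa [sub_eq_zero] using hb
      have hγC : (Complex.I * (γ j : ℂ)) ≠ 0 := by
        simp [Complex.I_ne_zero, Complex.ofReal_eq_zero, hγ0]
      have hval : ∀ T : ℝ, c T j = (1/(T:ℂ)) * (a j *
          ((Complex.exp (Complex.I * (γ j : ℂ) * (T:ℂ)) - 1) / (Complex.I * (γ j : ℂ)))) := by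
        intro T
        simp only [hc]
        congr 1
        rw [intervalIntegral.integral_const_mul, integral_exp_mul_complex hγC]
        rw [Complex.ofReal_zero, mul_zero, Complex.exp_zero]
      have hbound : ∀ T : ℝ, 0 < T →
          ‖c T j‖ ≤ (‖a j‖ * (2 / |γ j|)) / T := by
        intro T hT
        rw [hval T]
        rw [norm_mul, norm_mul, norm_div]
        have h1 : ‖(1/(T:ℂ))‖ = 1/T := by
          rw [norm_div, norm_one, Complex.norm_real, Real.norm_of_nonneg hT.le]
        have h3 : ‖Complex.exp (Complex.I * (γ j : ℂ) * (T:ℂ))‖ = 1 := by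
          rw [Complex.norm_exp]
          have : (Complex.I * (γ j : ℂ) * (T:ℂ)).re = 0 := by simp
          rw [this, Real.exp_zero]
        have h2 : ‖Complex.exp (Complex.I * (γ j : ℂ) * (T:ℂ)) - 1‖ ≤ 2 := by
          calc ‖Complex.exp (Complex.I * (γ j : ℂ) * (T:ℂ)) - 1‖
              ≤ ‖Complex.exp (Complex.I * (γ j : ℂ) * (T:ℂ))‖ + ‖(1:ℂ)‖ := norm_sub_le _ _
            _ ≤ 2 := by rw [h3, norm_one]; norm_num
        have h4 : ‖Complex.I * (γ j : ℂ)‖ = |γ j| := by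
          rw [norm_mul, Complex.norm_I, one_mul, Complex.norm_real, Real.norm_eq_abs]
        rw [norm_div, h4, norm_one, Complex.norm_real, Real.norm_of_nonneg hT.le]
        have he : (1:ℝ)/T * (‖a j‖ * (‖Complex.exp (Complex.I * (γ j : ℂ) * (T:ℂ)) - 1‖/|γ j|))
            = ‖a j‖ * (‖Complex.exp (Complex.I * (γ j : ℂ) * (T:ℂ)) - 1‖/|γ j|)/T := by ring
        rw [he]
        gcongr
      have htend0 : Tendsto (fun T : ℝ => (‖a j‖ * (2 / |γ j|)) / T) atTop (𝓝 0) :=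
        Tendsto.div_atTop tendsto_const_nhds tendsto_id
      have : Tendsto (fun T => c T j) atTop (𝓝 0) := by
        refine squeeze_zero_norm' ?_ htend0
        filter_upwards [eventually_gt_atTop (0:ℝ)] with T hT
        exact hbound T hT
      rw [hg]
      simp only [if_neg hb]
      exact this
  -- dominated convergence
  have hdom : ∀ᶠ T in (atTop : Filter ℝ), ∀ j, ‖c T j‖ ≤ ‖a j‖ := by
    filter_upwards [eventually_gt_atTop (0:ℝ)] with T hT j
    have hb : ‖∫ s in (0:ℝ)..T, a j * Complex.exp (Complex.I * (γ j : ℂ) * (s : ℂ))‖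
        ≤ ‖a j‖ * |T - 0| := by
      apply intervalIntegral.norm_integral_le_of_norm_le_const
      intro s _
      exact (hnorm j s).le
    simp only [hc, norm_mul]
    have h1 : ‖(1/(T:ℂ))‖ = 1/T := by
      rw [norm_div, norm_one, Complex.norm_real, Real.norm_of_nonneg hT.le]
    rw [h1]
    calc 1/T * ‖∫ s in (0:ℝ)..T, a j * Complex.exp (Complex.I * (γ j : ℂ) * (s : ℂ))‖
        ≤ 1/T * (‖a j‖ * |T - 0|) := by
          apply mul_le_mul_of_nonneg_left hb
          positivity
      _ = ‖a j‖ := by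
          rw [sub_zero, abs_of_pos hT]
          field_simp
  have hmain : Tendsto (fun T => ∑' j, c T j) atTop (𝓝 (∑' j, g j)) :=
    tendsto_tsum_of_dominated_convergence ha hlim hdom
  have hev0 : (fun T => ∑' j, c T j) =ᶠ[atTop] (fun _ => 0) := by
    filter_upwards [eventually_gt_atTop (0:ℝ)] with T hT
    exact hzero T hT
  have hgz : ∑' j, g j = 0 :=
    tendsto_nhds_unique (((tendsto_congr' hev0).mp hmain)) tendsto_const_nhds
  rw [tsum_subtype]
  rw [← hgz]
  apply tsum_congr
  intro j
  rw [Set.indicator_apply, hg]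
  simp only [Set.mem_setOf_eq]

universe u

open MeasureTheory Filter Topology in
lemma stmt11_fiber_tsum (d : ℕ) : ∀ {J : Type u} [Countable J] (a : J → ℂ) (v : J → Fin d → ℚ),
    (Summable fun j => ‖a j‖) →
    (∀ x : Fin d → ℝ, HasSum (fun j => a j *
      Complex.exp (2 * (Real.pi : ℂ) * Complex.I * (∑ i, (v j i : ℂ) * (x i : ℂ)))) 0) →
    ∀ u : Fin d → ℚ, ∑' j : {j : J | v j = u}, a (j : J) = 0 := by
  induction d with
  | zero =>
    intro J _ a v ha h u
    have hset : {j : J | v j = u} = Set.univ := by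
      ext j; simp [funext_iff]
    rw [hset, tsum_univ]
    have h0 := h 0
    have he : (fun j => a j * Complex.exp (2 * (Real.pi : ℂ) * Complex.I *
        (∑ i, (v j i : ℂ) * ((0 : Fin 0 → ℝ) i : ℂ)))) = a := by
      funext j
      simp
    rw [he] at h0
    exact h0.tsum_eq
  | succ d IH =>
    intro J _ a v ha h u
    -- one-variable step in the first coordinate
    have step : ∀ x' : Fin d → ℝ,
        HasSum (fun j : {j : J | v j 0 = u 0} => a (j : J) *
          Complex.exp (2 * (Real.pi : ℂ) * Complex.I *
            (∑ i, (v (j : J) i.succ : ℂ) * (x' i : ℂ)))) 0 := by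
      intro x'
      set A : J → ℂ := fun j => a j * Complex.exp (2 * (Real.pi : ℂ) * Complex.I *
            (∑ i, (v j i.succ : ℂ) * (x' i : ℂ))) with hA
      have hAnorm : ∀ j, ‖A j‖ = ‖a j‖ := by
        intro j
        rw [hA]
        simp only [norm_mul]
        have : ‖Complex.exp (2 * (Real.pi : ℂ) * Complex.I *
            (∑ i, (v j i.succ : ℂ) * (x' i : ℂ)))‖ = 1 := by
          rw [Complex.norm_exp]
          have hre : (2 * (Real.pi : ℂ) * Complex.I *
              (∑ i, (v j i.succ : ℂ) * (x' i : ℂ))).re = 0 := by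
            have : (∑ i, (v j i.succ : ℂ) * (x' i : ℂ)) =
                ((∑ i, (v j i.succ : ℝ) * (x' i : ℝ) : ℝ) : ℂ) := by
              push_cast; ring
            rw [this]
            simp [Complex.mul_re, Complex.mul_im]
          rw [hre, Real.exp_zero]
        rw [this, mul_one]
      have hAsum : Summable fun j => ‖A j‖ := by
        apply ha.congr
        intro j
        exact (hAnorm j).symm
      have hone : ∀ s : ℝ, HasSum (fun j => A j * Complex.exp (Complex.I *
          ((2 * Real.pi * (v j 0 : ℝ) : ℝ) : ℂ) * (s : ℂ))) 0 := by
        intro s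
        have hx := h (Fin.cons s x')
        have he : (fun j : J => a j * Complex.exp (2 * (Real.pi : ℂ) * Complex.I *
            (∑ i, (v j i : ℂ) * ((Fin.cons s x' : Fin (d+1) → ℝ) i : ℂ))))
            = fun j : J => A j * Complex.exp (Complex.I *
              ((2 * Real.pi * (v j 0 : ℝ) : ℝ) : ℂ) * (s : ℂ)) := by
          funext j
          simp only [hA]
          rw [mul_assoc (a j), ← Complex.exp_add]
          congr 1
          rw [Fin.sum_univ_succ]
          simp only [Fin.cons_zero, Fin.cons_succ]
          push_cast
          ring
        rw [he] at hx
        exact hx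
      have h1 := stmt11_one_var A (fun j => 2 * Real.pi * (v j 0 : ℝ)) hAsum hone (2 * Real.pi * (u 0 : ℝ))
      have hset : {j : J | 2 * Real.pi * (v j 0 : ℝ) = 2 * Real.pi * (u 0 : ℝ)}
          = {j : J | v j 0 = u 0} := by
        ext j
        simp only [Set.mem_setOf_eq]
        constructor
        · intro hj
          have := mul_left_cancel₀ (by positivity : (2 * Real.pi : ℝ) ≠ 0) hj
          exact_mod_cast this
        · intro hj; rw [hj]
      rw [hset] at h1
      have hAsub : Summable fun j : {j : J | v j 0 = u 0} => A (j : J) :=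
        (Summable.of_norm hAsum).subtype _
      have := hAsub.hasSum
      rw [h1] at this
      exact this
    have hres := IH (J := {j : J | v j 0 = u 0}) (fun j => a (j : J))
      (fun j i => v (j : J) i.succ) (ha.subtype _) step (fun i => u i.succ)
    let e : {p : {j : J | v j 0 = u 0} | (fun i : Fin d => v (p : J) i.succ) = fun i : Fin d => u i.succ}
        ≃ {j : J | v j = u} :=
      { toFun := fun p => ⟨(p : {j : J | v j 0 = u 0}), by
          show v _ = u
          funext i
          refine Fin.cases ?_ ?_ i
          · exact p.1.2
          · intro k; exact congrFun p.2 k⟩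
        invFun := fun j => ⟨⟨(j : J), by
            show v (j : J) 0 = u 0
            rw [show v (j : J) = u from j.2]⟩, by
          funext i
          show v (j : J) i.succ = u i.succ
          rw [show v (j : J) = u from j.2]⟩
        left_inv := fun p => rfl
        right_inv := fun j => rfl }
    rw [← Equiv.tsum_eq e (fun j : {j : J | v j = u} => a (j : J))]
    refine Eq.trans (tsum_congr fun c => rfl) hres

lemma stmt11_hasSum_sumElim {β γ : Type*} {f : β → ℂ} {g : γ → ℂ} {a b : ℂ}
    (hf : HasSum f a) (hg : HasSum g b) : HasSum (Sum.elim f g) (a + b) :=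
  HasSum.add_isCompl Set.isCompl_range_inl_range_inr
    (Sum.inl_injective.hasSum_range_iff.mpr hf)
    (Sum.inr_injective.hasSum_range_iff.mpr hg)

lemma stmt11_sum_mulVec3 {R : Type*} [CommRing R] {ι κ : Type*} [Fintype ι] [Fintype κ]
    (x : ι → R) (S : ι → ι → R) (Bc : ι → κ → R) (w : κ → R) :
    ∑ i, ∑ j, x i * S i j * (∑ a, Bc j a * w a)
      = ∑ a, (∑ i, ∑ j, x i * S i j * Bc j a) * w a := by
  simp_rw [Finset.mul_sum, Finset.sum_mul]
  calc ∑ i, ∑ j, ∑ a, x i * S i j * (Bc j a * w a)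
      = ∑ i, ∑ a, ∑ j, x i * S i j * (Bc j a * w a) :=
        Finset.sum_congr rfl fun i _ => Finset.sum_comm
    _ = ∑ a, ∑ i, ∑ j, x i * S i j * (Bc j a * w a) := Finset.sum_comm
    _ = ∑ a, ∑ i, ∑ j, x i * S i j * Bc j a * w a :=
        Finset.sum_congr rfl fun a _ => Finset.sum_congr rfl fun i _ =>
          Finset.sum_congr rfl fun j _ => by ring

lemma stmt11_sum_swap2 {R : Type*} [CommRing R] {κ : Type*} [Fintype κ]
    (x : κ → R) (M : κ → κ → R) (w : κ → R) :
    ∑ b, ∑ a, x b * M b a * w a = ∑ a, (∑ b, x b * M b a) * w a :=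
  calc ∑ b, ∑ a, x b * M b a * w a = ∑ a, ∑ b, x b * M b a * w a := Finset.sum_comm
    _ = ∑ a, (∑ b, x b * M b a) * w a :=
        Finset.sum_congr rfl fun a _ => (Finset.sum_mul _ _ _).symm

section BilinAux
variable {ι : Type*} [Fintype ι]

lemma stmt11_bilinQ_comm {S : Matrix ι ι ℤ} (hS : S.IsSymm) (x y : ι → ℚ) :
    bilinQ S x y = bilinQ S y x := by
  rw [bilinQ, bilinQ, Finset.sum_comm]
  refine Finset.sum_congr rfl fun j _ => Finset.sum_congr rfl fun i _ => ?_
  rw [show S j i = S i j from hS.apply i j]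
  ring

lemma stmt11_bilinQ_add_left (S : Matrix ι ι ℤ) (x y z : ι → ℚ) :
    bilinQ S (fun i => x i + y i) z = bilinQ S x z + bilinQ S y z := by
  simp [bilinQ, add_mul, Finset.sum_add_distrib]

lemma stmt11_bilinQ_add_right (S : Matrix ι ι ℤ) (x y z : ι → ℚ) :
    bilinQ S x (fun i => y i + z i) = bilinQ S x y + bilinQ S x z := by
  simp [bilinQ, mul_add, Finset.sum_add_distrib]

lemma stmt11_bilinQ_sub_left (S : Matrix ι ι ℤ) (x y z : ι → ℚ) :
    bilinQ S (fun i => x i - y i) z = bilinQ S x z - bilinQ S y z := by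
  simp [bilinQ, sub_mul, Finset.sum_sub_distrib]

lemma stmt11_bilinQ_eq_dot (S : Matrix ι ι ℤ) (x y : ι → ℚ) :
    bilinQ S x y = x ⬝ᵥ ((S.map (Int.cast : ℤ → ℚ)) *ᵥ y) := by
  simp [bilinQ, Matrix.mulVec, dotProduct, Matrix.map_apply, Finset.mul_sum, mul_assoc]

lemma stmt11_bilinQ_mulVec_mulVec {mr : ℕ} (S : Matrix ι ι ℤ) (B : Matrix ι (Fin mr) ℤ)
    (v w : Fin mr → ℚ) :
    bilinQ S ((B.map (Int.cast : ℤ → ℚ)).mulVec v) ((B.map (Int.cast : ℤ → ℚ)).mulVec w)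
      = bilinQ (B.transpose * S * B) v w := by
  rw [stmt11_bilinQ_eq_dot, stmt11_bilinQ_eq_dot]
  have hmap : (B.transpose * S * B).map (Int.cast : ℤ → ℚ)
      = (B.map (Int.cast : ℤ → ℚ)).transpose * (S.map (Int.cast : ℤ → ℚ))
        * (B.map (Int.cast : ℤ → ℚ)) := by
    have h1 := Matrix.map_mul (L := B.transpose * S) (M := B) (f := Int.castRingHom ℚ)
    have h2 := Matrix.map_mul (L := B.transpose) (M := S) (f := Int.castRingHom ℚ)
    simp only [Int.coe_castRingHom] at h1 h2
    rw [h1, h2, Matrix.transpose_map]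
  rw [hmap, ← Matrix.mulVec_mulVec, ← Matrix.mulVec_mulVec,
    Matrix.dotProduct_mulVec v, Matrix.vecMul_transpose]

lemma stmt11_bilinQ_single {mr : ℕ} (M : Matrix (Fin mr) (Fin mr) ℤ) (u : Fin mr → ℚ)
    (a : Fin mr) :
    bilinQ M u (Pi.single a 1) = ∑ b, u b * (M b a : ℚ) := by
  simp [bilinQ, Pi.single_apply, mul_ite, Finset.sum_ite_eq']

lemma stmt11_bilinC_mulVec {mr : ℕ} (S : Matrix ι ι ℤ) (B : Matrix ι (Fin mr) ℤ)
    (y : ι → ℚ) (w : Fin mr → ℂ) :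
    bilinC S (fun i => (y i : ℂ)) ((B.map (Int.cast : ℤ → ℂ)).mulVec w)
      = ∑ a, ((bilinQ S y (fun j => (B j a : ℚ)) : ℚ) : ℂ) * w a := by
  have hz : ∀ j, (B.map (Int.cast : ℤ → ℂ)).mulVec w j = ∑ a, (B j a : ℂ) * w a := by
    intro j; simp [Matrix.mulVec, dotProduct, Matrix.map_apply]
  calc bilinC S (fun i => (y i : ℂ)) ((B.map (Int.cast : ℤ → ℂ)).mulVec w)
      = ∑ i, ∑ j, (y i : ℂ) * (S i j : ℂ) * (∑ a, (B j a : ℂ) * w a) := by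
        rw [bilinC]
        exact Finset.sum_congr rfl fun i _ => Finset.sum_congr rfl fun j _ => by rw [hz]
    _ = ∑ a, (∑ i, ∑ j, (y i : ℂ) * (S i j : ℂ) * (B j a : ℂ)) * w a :=
        stmt11_sum_mulVec3 _ _ _ _
    _ = ∑ a, ((bilinQ S y (fun j => (B j a : ℚ)) : ℚ) : ℂ) * w a := by
        refine Finset.sum_congr rfl fun a _ => ?_
        congr 1
        simp only [bilinQ]
        push_cast
        ring

lemma stmt11_bilinC_single {mr : ℕ} (M : Matrix (Fin mr) (Fin mr) ℤ) (y : Fin mr → ℚ)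
    (w : Fin mr → ℂ) :
    bilinC M (fun b => (y b : ℂ)) w
      = ∑ a, ((bilinQ M y (Pi.single a 1) : ℚ) : ℂ) * w a := by
  calc bilinC M (fun b => (y b : ℂ)) w
      = ∑ a, (∑ b, (y b : ℂ) * (M b a : ℂ)) * w a := stmt11_sum_swap2 _ _ _
    _ = ∑ a, ((bilinQ M y (Pi.single a 1) : ℚ) : ℂ) * w a := by
        refine Finset.sum_congr rfl fun a _ => ?_
        congr 1
        rw [stmt11_bilinQ_single]
        push_cast
        ring

end BilinAux

/-- Order estimate for pullbacks: if the pullback `φ|_M` is not identically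
zero, then its order at infinity is bounded below by any lower bound of the norms `(l_⊥,l_⊥)`
of the `M^⊥`-projections of the Fourier support of `φ`; in particular if `l_⊥ ≠ 0` on all of
the support, every Fourier expansion of `φ|_M` has cusp support. -/
theorem statement11 {ι : Type*} [Fintype ι] [DecidableEq ι]
    (S : Matrix ι ι ℤ) (hS : IsEvenPosDef S)
    (mr : ℕ) (hmr : 0 < mr) (hrank : mr < Fintype.card ι)
    (B : Matrix ι (Fin mr) ℤ)
    (hinj : Function.Injective fun w : Fin mr → ℚ => (B.map (Int.cast : ℤ → ℚ)).mulVec w)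
    (k t : ℚ) (ht : 0 < t)
    (χ : SL2Z → ℂ) (hχ : ∀ A, HasFiniteOrder (χ A))
    (ν : (ι → ℤ) → (ι → ℤ) → ℂ) (hν : ∀ x y, HasFiniteOrder (ν x y))
    (f : ℚ × (ι → ℚ) → ℂ) (φ : ℂ → (ι → ℂ) → ℂ)
    (hφ : IsJacobiForm S k t χ ν f φ)
    -- `lperp p` is the orthogonal projection of the Fourier index `p.2` onto `M^⊥ ⊗ ℚ`:
    (lperp : ℚ × (ι → ℚ) → ι → ℚ)
    (hlperp : ∀ p, f p ≠ 0 →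
      (∃ w : Fin mr → ℚ, (fun i => p.2 i - lperp p i) = (B.map (Int.cast : ℤ → ℚ)).mulVec w) ∧
      (∀ w : Fin mr → ℚ, bilinQ S (lperp p) ((B.map (Int.cast : ℤ → ℚ)).mulVec w) = 0)) :
    ((∃ (τ : ℂ) (w : Fin mr → ℂ), 0 < τ.im ∧
        φ τ ((B.map (Int.cast : ℤ → ℂ)).mulVec w) ≠ 0) →
      ∀ c : ℚ, (∀ p, f p ≠ 0 → c ≤ bilinQ S (lperp p) (lperp p)) →
      ∀ g : ℚ × (Fin mr → ℚ) → ℂ,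
        IsJacobiForm (B.transpose * S * B) k t χ
          (fun x y => ν (B.mulVec x) (B.mulVec y)) g
          (fun τ w => φ τ ((B.map (Int.cast : ℤ → ℂ)).mulVec w)) →
        ∀ q, g q ≠ 0 →
          c ≤ 2 * q.1 * t - bilinQ (B.transpose * S * B) q.2 q.2) ∧
    ((∀ p, f p ≠ 0 → lperp p ≠ 0) →
      ∀ g : ℚ × (Fin mr → ℚ) → ℂ,
        IsJacobiForm (B.transpose * S * B) k t χ
          (fun x y => ν (B.mulVec x) (B.mulVec y)) g
          (fun τ w => φ τ ((B.map (Int.cast : ℤ → ℂ)).mulVec w)) →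
        IsCuspSupport (B.transpose * S * B) t g) := by
  classical
  -- the core claim: every nonzero Fourier coefficient of the pullback comes from a
  -- coefficient of φ whose M-part matches
  have hcol : ∀ a : Fin mr, (B.map (Int.cast : ℤ → ℚ)).mulVec (Pi.single a 1)
      = fun j => (B j a : ℚ) := by
    intro a
    funext j
    simp [Matrix.mulVec_single, Matrix.map_apply]
  have hMzero : ∀ u : Fin mr → ℚ,
      (∀ a, bilinQ (B.transpose * S * B) u (Pi.single a 1) = 0) → u = 0 := by
    intro u hu
    by_contra hu0
    have hBu : (B.map (Int.cast : ℤ → ℚ)).mulVec u ≠ 0 := by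
      intro h0
      apply hu0
      apply hinj
      show (B.map (Int.cast : ℤ → ℚ)).mulVec u = (B.map (Int.cast : ℤ → ℚ)).mulVec 0
      rw [h0, Matrix.mulVec_zero]
    have hpos := hS.posdef _ hBu
    rw [stmt11_bilinQ_mulVec_mulVec] at hpos
    have h0 : bilinQ (B.transpose * S * B) u u = 0 := by
      have h1 : bilinQ (B.transpose * S * B) u u
          = ∑ a, (∑ b, u b * ((B.transpose * S * B) b a : ℚ)) * u a :=
        stmt11_sum_swap2 _ _ _
      rw [h1]
      refine Finset.sum_eq_zero fun a _ => ?_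
      rw [← stmt11_bilinQ_single, hu a, zero_mul]
    rw [h0] at hpos
    exact lt_irrefl _ hpos
  have core : ∀ g : ℚ × (Fin mr → ℚ) → ℂ,
      IsJacobiForm (B.transpose * S * B) k t χ
        (fun x y => ν (B.mulVec x) (B.mulVec y)) g
        (fun τ w => φ τ ((B.map (Int.cast : ℤ → ℂ)).mulVec w)) →
      ∀ q : ℚ × (Fin mr → ℚ), g q ≠ 0 →
      ∃ p : ℚ × (ι → ℚ), f p ≠ 0 ∧ p.1 = q.1 ∧
        bilinQ S p.2 p.2
          = bilinQ (B.transpose * S * B) q.2 q.2 + bilinQ S (lperp p) (lperp p) := by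
    intro g hg q hq
    set vL : ℚ × (ι → ℚ) → Fin (mr + 1) → ℚ :=
      fun p => Fin.cons p.1 (fun a => bilinQ S p.2 (fun j => (B j a : ℚ))) with hvL
    set vR : ℚ × (Fin mr → ℚ) → Fin (mr + 1) → ℚ :=
      fun q' => Fin.cons q'.1
        (fun a => bilinQ (B.transpose * S * B) q'.2 (Pi.single a 1)) with hvR
    set aJ : (ℚ × (ι → ℚ)) ⊕ (ℚ × (Fin mr → ℚ)) → ℂ :=
      Sum.elim
        (fun p => f p * Complex.exp (2 * (π : ℂ) * Complex.I * ((p.1 : ℂ) * Complex.I)))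
        (fun q' => -(g q' * Complex.exp (2 * (π : ℂ) * Complex.I * ((q'.1 : ℂ) * Complex.I))))
      with haJ
    set vJ := Sum.elim vL vR with hvJ
    have hmain : ∀ x : Fin (mr + 1) → ℝ, HasSum (fun j => aJ j *
        Complex.exp (2 * (π : ℂ) * Complex.I * (∑ i, (vJ j i : ℂ) * (x i : ℂ)))) 0 := by
      intro x
      have hτ : (0 : ℝ) < ((x 0 : ℂ) + Complex.I).im := by simp
      have hL := hφ.expansion ((x 0 : ℂ) + Complex.I) hτ
        ((B.map (Int.cast : ℤ → ℂ)).mulVec (fun a => (x a.succ : ℂ)))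
      have hR := hg.expansion ((x 0 : ℂ) + Complex.I) hτ (fun a => (x a.succ : ℂ))
      have hcomb := stmt11_hasSum_sumElim hL hR.neg
      convert hcomb using 1
      · funext j
        cases j with
        | inl p =>
          simp only [haJ, hvJ, hvL, Sum.elim_inl]
          rw [mul_assoc, ← Complex.exp_add]
          congr 1
          rw [stmt11_bilinC_mulVec, Fin.sum_univ_succ]
          simp only [Fin.cons_zero, Fin.cons_succ]
          ring
        | inr q' =>
          simp only [haJ, hvJ, hvR, Sum.elim_inr]
          rw [neg_mul, mul_assoc, ← Complex.exp_add]
          congr 2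
          rw [stmt11_bilinC_single, Fin.sum_univ_succ]
          simp only [Fin.cons_zero, Fin.cons_succ]
          ring
      · simp
    have hsummable : Summable fun j => ‖aJ j‖ := by
      have h0 := hmain 0
      have he : (fun j => aJ j * Complex.exp (2 * (π : ℂ) * Complex.I *
          (∑ i, (vJ j i : ℂ) * (((0 : Fin (mr + 1) → ℝ) i : ℝ) : ℂ)))) = aJ := by
        funext j
        simp
      rw [he] at h0
      exact summable_norm_iff.mpr h0.summable
    have hfiber := stmt11_fiber_tsum (mr + 1) aJ vJ hsummable hmain (vR q)
    have hinjR : ∀ q₁ q₂ : ℚ × (Fin mr → ℚ), vR q₁ = vR q₂ → q₁ = q₂ := by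
      intro q₁ q₂ hq12
      have h1 : q₁.1 = q₂.1 := by
        have := congrFun hq12 0
        simpa [hvR] using this
      have h2 : q₁.2 = q₂.2 := by
        have htail : ∀ a, bilinQ (B.transpose * S * B) q₁.2 (Pi.single a 1)
            = bilinQ (B.transpose * S * B) q₂.2 (Pi.single a 1) := by
          intro a
          have := congrFun hq12 a.succ
          simpa [hvR] using this
        have hdiff : ∀ a, bilinQ (B.transpose * S * B)
            (fun b => q₁.2 b - q₂.2 b) (Pi.single a 1) = 0 := by
          intro a
          rw [stmt11_bilinQ_sub_left, htail a, sub_self]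
        have h0 := hMzero _ hdiff
        funext b
        have := congrFun h0 b
        simpa [sub_eq_zero] using this
      exact Prod.ext h1 h2
    have hpfind : ∃ p : ℚ × (ι → ℚ), f p ≠ 0 ∧ vL p = vR q := by
      by_contra hnp
      push_neg at hnp
      have hj0 : vJ (Sum.inr q) = vR q := by simp [hvJ]
      set j0 : {j : (ℚ × (ι → ℚ)) ⊕ (ℚ × (Fin mr → ℚ)) | vJ j = vR q} := ⟨Sum.inr q, hj0⟩
        with hj0def
      have hsingle : ∑' (j : {j : (ℚ × (ι → ℚ)) ⊕ (ℚ × (Fin mr → ℚ)) | vJ j = vR q}),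
          aJ (j : (ℚ × (ι → ℚ)) ⊕ (ℚ × (Fin mr → ℚ))) = aJ (Sum.inr q) := by
        refine tsum_eq_single j0 ?_
        rintro ⟨j, hjmem⟩ hne
        cases j with
        | inl p =>
          have hvLp : vL p = vR q := hjmem
          by_contra haj
          have hfp : f p ≠ 0 := by
            intro h0
            apply haj
            simp [haJ, h0]
          exact hnp p hfp hvLp
        | inr q' =>
          exfalso
          apply hne
          have hq' : q' = q := hinjR q' q hjmem
          subst hq'
          exact Subtype.ext rfl
      rw [hfiber] at hsingle
      have : g q * Complex.exp (2 * (π : ℂ) * Complex.I * ((q.1 : ℂ) * Complex.I)) = 0 := by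
        have := hsingle.symm
        simp only [haJ, Sum.elim_inr, neg_eq_zero] at this
        exact this
      rcases mul_eq_zero.mp this with h0 | h0
      · exact hq h0
      · exact Complex.exp_ne_zero _ h0
    obtain ⟨p, hfp, hvpq⟩ := hpfind
    obtain ⟨⟨w₀, hw₀⟩, horth⟩ := hlperp p hfp
    have hp1 : p.1 = q.1 := by
      have := congrFun hvpq 0
      simpa [hvL, hvR] using this
    have htail : ∀ a, bilinQ S p.2 (fun j => (B j a : ℚ))
        = bilinQ (B.transpose * S * B) q.2 (Pi.single a 1) := by
      intro a
      have := congrFun hvpq a.succ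
      simpa [hvL, hvR] using this
    have hdec : p.2 = fun i => (B.map (Int.cast : ℤ → ℚ)).mulVec w₀ i + lperp p i := by
      funext i
      have := congrFun hw₀ i
      linarith
    have hBw : ∀ a, bilinQ S p.2 (fun j => (B j a : ℚ))
        = bilinQ (B.transpose * S * B) w₀ (Pi.single a 1) := by
      intro a
      rw [hdec, stmt11_bilinQ_add_left, ← hcol a, horth (Pi.single a 1),
        stmt11_bilinQ_mulVec_mulVec, add_zero]
    have hw₀q : w₀ = q.2 := by
      have hdiff : ∀ a, bilinQ (B.transpose * S * B)
          (fun b => w₀ b - q.2 b) (Pi.single a 1) = 0 := by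
        intro a
        rw [stmt11_bilinQ_sub_left, ← hBw a, htail a, sub_self]
      have h0 := hMzero _ hdiff
      funext b
      have := congrFun h0 b
      simpa [sub_eq_zero] using this
    refine ⟨p, hfp, hp1, ?_⟩
    rw [hw₀q] at hdec
    have hcross : bilinQ S (lperp p) ((B.map (Int.cast : ℤ → ℚ)).mulVec q.2) = 0 := horth q.2
    have hcross' : bilinQ S ((B.map (Int.cast : ℤ → ℚ)).mulVec q.2) (lperp p) = 0 := by
      rw [stmt11_bilinQ_comm hS.symm]
      exact hcross
    calc bilinQ S p.2 p.2
        = bilinQ S (fun i => (B.map (Int.cast : ℤ → ℚ)).mulVec q.2 i + lperp p i)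
            (fun i => (B.map (Int.cast : ℤ → ℚ)).mulVec q.2 i + lperp p i) := by rw [← hdec]
      _ = bilinQ S ((B.map (Int.cast : ℤ → ℚ)).mulVec q.2)
            ((B.map (Int.cast : ℤ → ℚ)).mulVec q.2)
          + bilinQ S ((B.map (Int.cast : ℤ → ℚ)).mulVec q.2) (lperp p)
          + (bilinQ S (lperp p) ((B.map (Int.cast : ℤ → ℚ)).mulVec q.2)
          + bilinQ S (lperp p) (lperp p)) := by
          rw [stmt11_bilinQ_add_left, stmt11_bilinQ_add_right, stmt11_bilinQ_add_right]
      _ = bilinQ (B.transpose * S * B) q.2 q.2 + bilinQ S (lperp p) (lperp p) := by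
          rw [hcross, hcross', stmt11_bilinQ_mulVec_mulVec]
          ring
  constructor
  · rintro - c hc g hg q hq
    obtain ⟨p, hfp, hp1, heq⟩ := core g hg q hq
    have hsupp := (hφ.support p hfp).2.2
    have hcle := hc p hfp
    have h2t : 2 * q.1 * t = 2 * p.1 * t := by rw [hp1]
    linarith
  · intro hl g hg q hq
    obtain ⟨p, hfp, hp1, heq⟩ := core g hg q hq
    have hsupp := (hφ.support p hfp).2.2
    have hpos := hS.posdef (lperp p) (hl p hfp)
    have h2t : 2 * q.1 * t = 2 * p.1 * t := by rw [hp1]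
    linarith
end
end

section
/- Let m ≥ 2 and let b₁,…,b_m be integers such that at least two of the b_i are nonzero, gcd(b₁,…,b_m) = 1, and b₁+⋯+b_m is odd. Then there exist odd integers c₁,…,c_m with c₁b₁ + c₂b₂ + ⋯ + c_m b_m = 1. -/
open scoped BigOperators

lemma exists_sum_eq_gcd {ι : Type*} [DecidableEq ι] (s : Finset ι) (b : ι → ℤ) :
    ∃ a : ι → ℤ, ∑ i ∈ s, a i * b i = s.gcd b := by
  induction s using Finset.induction with
  | empty => exact ⟨0, by simp⟩
  | @insert x s hx ih =>
    obtain ⟨a, ha⟩ := ih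
    obtain ⟨u, v, huv⟩ := exists_gcd_eq_mul_add_mul (b x) (s.gcd b)
    refine ⟨fun i => if i = x then u else v * a i, ?_⟩
    rw [Finset.sum_insert hx, Finset.gcd_insert, huv]
    simp only [if_pos rfl]
    rw [mul_comm (b x) u]
    congr 1
    rw [← ha, Finset.sum_mul]
    apply Finset.sum_congr rfl
    intro i hi
    rw [if_neg (by rintro rfl; exact hx hi)]
    ring

/-- If `b₁,…,b_m` are integers, at least two of which are nonzero, with
`gcd(b₁,…,b_m) = 1` and `b₁+⋯+b_m` odd, then `1` can be represented as `∑ cᵢ bᵢ` with all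
coefficients `cᵢ` odd. -/
theorem statement12 (m : ℕ) (hm : 2 ≤ m) (b : Fin m → ℤ)
    (h2 : ∃ i j : Fin m, i ≠ j ∧ b i ≠ 0 ∧ b j ≠ 0)
    (hgcd : Finset.univ.gcd b = 1)
    (hodd : Odd (∑ i, b i)) :
    ∃ c : Fin m → ℤ, (∀ i, Odd (c i)) ∧ ∑ i, c i * b i = 1 := by
  obtain ⟨a, ha⟩ := exists_sum_eq_gcd Finset.univ b
  rw [hgcd] at ha
  obtain ⟨k, hk⟩ := hodd
  refine ⟨fun i => 1 + 2 * (-k) * a i, fun i => ⟨-k * a i, by ring⟩, ?_⟩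
  have : ∑ i, (1 + 2 * (-k) * a i) * b i
      = ∑ i, b i + 2 * (-k) * ∑ i, a i * b i := by
    rw [Finset.mul_sum, ← Finset.sum_add_distrib]
    apply Finset.sum_congr rfl; intro i _; ring
  rw [this, ha, hk]; ring
end
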